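/- arXiv:0812.4113 — 2 statements merged into one kernel-verified Lean document; each statement's English description precedes it below -/
import Mathlib

section
/- If T = (Λ_1,…,Λ_n) is an updown λ-tableau and λ is a partition of n, then all exponents p_1,…,p_n of T are equal to zero, and f(T) equals the product of the hook lengths of all boxes of λ. -/
/-!
Common definitions for the fusion procedure for the Brauer algebra
(Isaev–Molev, "Fusion procedure for the Brauer algebra").
-/

noncomputable section
open scoped BigOperators
open Classical

namespace BrauerFusion

/-- The base field `F = ℂ(ω)`. -/
abbrev F : Type := RatFunc ℂ

/-- The indeterminate `ω ∈ ℂ(ω)`. -/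
def ωF : F := RatFunc.X

/-- `s e : ℕ → A` satisfy the defining relations of the Brauer algebra `B_n(ω)`
over the commutative base `R`; here `s i`, `e i` represent the generators
`s_i`, `e_i` for `1 ≤ i ≤ n - 1` (values at other indices are irrelevant). -/
structure IsBrauer {R : Type*} {A : Type*} [CommRing R] [Ring A] [Algebra R A]
    (n : ℕ) (ω : R) (s e : ℕ → A) : Prop where
  ss : ∀ i, 1 ≤ i → i + 1 ≤ n → s i * s i = 1
  ee : ∀ i, 1 ≤ i → i + 1 ≤ n → e i * e i = ω • e i
  se : ∀ i, 1 ≤ i → i + 1 ≤ n → s i * e i = e i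
  es : ∀ i, 1 ≤ i → i + 1 ≤ n → e i * s i = e i
  ss_comm : ∀ i j, 1 ≤ i → j + 1 ≤ n → i + 1 < j → s i * s j = s j * s i
  ee_comm : ∀ i j, 1 ≤ i → j + 1 ≤ n → i + 1 < j → e i * e j = e j * e i
  se_comm : ∀ i j, 1 ≤ i → j + 1 ≤ n → i + 1 < j → s i * e j = e j * s i
  es_comm : ∀ i j, 1 ≤ i → j + 1 ≤ n → i + 1 < j → s j * e i = e i * s j
  braid : ∀ i, 1 ≤ i → i + 2 ≤ n → s i * s (i+1) * s i = s (i+1) * s i * s (i+1)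
  eee₁ : ∀ i, 1 ≤ i → i + 2 ≤ n → e i * e (i+1) * e i = e i
  eee₂ : ∀ i, 1 ≤ i → i + 2 ≤ n → e (i+1) * e i * e (i+1) = e (i+1)
  see : ∀ i, 1 ≤ i → i + 2 ≤ n → s i * e (i+1) * e i = s (i+1) * e i
  ees : ∀ i, 1 ≤ i → i + 2 ≤ n → e (i+1) * e i * s (i+1) = e (i+1) * s i

variable {A : Type*} [Ring A]

/-- The transposition `s_{ij} = s_i s_{i+1} ⋯ s_{j-2} s_{j-1} s_{j-2} ⋯ s_{i+1} s_i`
(for `i < j`), defined by `s_{i,i+1} = s_i` and `s_{ij} = s_i s_{i+1,j} s_i`. -/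
def sij (s : ℕ → A) (i j : ℕ) : A :=
  if h : i + 1 < j then s i * sij s (i+1) j * s i else s i
termination_by j - i
decreasing_by omega

/-- The element `e_{ij} = s_{i,j-1} e_{j-1} s_{i,j-1}` (for `i < j`), with `e_{i,i+1} = e_i`. -/
def eij (s e : ℕ → A) (i j : ℕ) : A :=
  if i + 1 < j then sij s i (j-1) * e (j-1) * sij s i (j-1) else e i

/-- `x_j^{(m)} = (ω-1)/2 + ∑_{r=1}^{j-1} (s_{rm} - e_{rm})`. -/
def jmM {R : Type*} [Field R] [Algebra R A] (ω : R) (s e : ℕ → A) (j m : ℕ) : A :=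
  algebraMap R A ((ω - 1) / 2) + ∑ r ∈ Finset.Icc 1 (j-1), (sij s r m - eij s e r m)

/-- The Jucys–Murphy element `x_r = (ω-1)/2 + ∑_{k=1}^{r-1} (s_{kr} - e_{kr})`. -/
def jm {R : Type*} [Field R] [Algebra R A] (ω : R) (s e : ℕ → A) (r : ℕ) : A :=
  jmM ω s e r r

/-- The pairs `(i, j)` with `1 ≤ i < j ≤ n` in lexicographic order. -/
def lexPairs (n : ℕ) : List (ℕ × ℕ) :=
  (List.range' 1 n).flatMap fun i =>
    ((List.range' 1 n).filter fun j => decide (i < j)).map fun j => (i, j)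

/-- The rational function
`Ψ(u_1,…,u_n) = ∏_{1≤i<j≤n} (1 - e_{ij}/(u_i+u_j)) ∏_{1≤i<j≤n} (1 - s_{ij}/(u_i-u_j))`,
with ordered products over the pairs `(i,j)` in lexicographic order. -/
def Psi {K : Type*} [Field K] [Algebra K A] (s e : ℕ → A) (n : ℕ) (u : ℕ → K) : A :=
  ((lexPairs n).map fun p => 1 - (u p.1 + u p.2)⁻¹ • eij s e p.1 p.2).prod *
  ((lexPairs n).map fun p => 1 - (u p.1 - u p.2)⁻¹ • sij s p.1 p.2).prod

/-- An updown tableau of length `n`: a sequence of Young diagrams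
`Λ_0 = ∅, Λ_1, …, Λ_n` in which `Λ_r` is obtained from `Λ_{r-1}` by adding
(`add r = true`) or removing (`add r = false`) the box `box r`. -/
structure UpDownTableau (n : ℕ) where
  shape : ℕ → YoungDiagram
  box : ℕ → ℕ × ℕ
  add : ℕ → Bool
  shape_zero : shape 0 = ⊥
  step_add : ∀ r, 1 ≤ r → r ≤ n → add r = true →
    box r ∉ shape (r-1) ∧ (shape r).cells = insert (box r) (shape (r-1)).cells
  step_rem : ∀ r, 1 ≤ r → r ≤ n → add r = false →
    box r ∉ shape r ∧ (shape (r-1)).cells = insert (box r) (shape r).cells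

/-- The content `c_r` of an updown tableau: `(ω-1)/2 + j - i` if the box `(i,j)` was
added at step `r`, and `-((ω-1)/2 + j - i)` if it was removed. -/
def content {R : Type*} [Field R] (ω : R) {n : ℕ} (T : UpDownTableau n) (r : ℕ) : R :=
  if T.add r then (ω - 1) / 2 + ((T.box r).2 : R) - ((T.box r).1 : R)
  else -((ω - 1) / 2 + ((T.box r).2 : R) - ((T.box r).1 : R))

/-- The content attached to a box `b` which can be removed from (`b ∈ μ`) or
added to (`b ∉ μ`) the diagram `μ`. -/
def boxContent {R : Type*} [Field R] (ω : R) (μ : YoungDiagram) (b : ℕ × ℕ) : R :=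
  if b ∈ μ then -((ω - 1) / 2 + (b.2 : R) - (b.1 : R))
  else (ω - 1) / 2 + (b.2 : R) - (b.1 : R)

/-- All boxes `(i,j)` with `i, j < N`, listed in lexicographic order. -/
def gridList (N : ℕ) : List (ℕ × ℕ) :=
  (List.range N).flatMap fun i => (List.range N).map fun j => (i, j)

/-- A box which can be added to, or removed from, the Young diagram `μ`
so that the result is again a Young diagram. -/
def isCandidate (μ : YoungDiagram) (b : ℕ × ℕ) : Prop :=
  (b ∉ μ ∧ ∃ ν : YoungDiagram, ν.cells = insert b μ.cells) ∨
  (b ∈ μ ∧ ∃ ν : YoungDiagram, μ.cells = insert b ν.cells)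

/-- The list of all boxes which can be added to or removed from `μ`. -/
def candList (μ : YoungDiagram) : List (ℕ × ℕ) :=
  (gridList (μ.card + 2)).filter fun b => decide (isCandidate μ b)

/-- The primitive idempotent `E_{(Λ_1,…,Λ_r)}`, defined recursively by `E = 1` for `r = 0`
and `E_T = E_U ∏_a (x_r - a)/(c_r - a)`, the product over the contents `a` of all boxes
(other than the box of step `r`) which can be added to or removed from `Λ_{r-1}`. -/
def idem {R : Type*} [Field R] [Algebra R A] (ω : R) (s e : ℕ → A) {n : ℕ}
    (T : UpDownTableau n) : ℕ → A
  | 0 => 1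
  | r + 1 =>
    idem ω s e T r *
      (((candList (T.shape r)).filter (fun b => decide (b ≠ T.box (r+1)))).map fun b =>
        (content ω T (r+1) - boxContent ω (T.shape r) b)⁻¹ •
          (jm ω s e (r+1) - algebraMap R A (boxContent ω (T.shape r) b))).prod

/-- `d_k` : the number of steps among the first `len` steps of `T` adding a box
on the diagonal `k`. -/
def dAdd {n : ℕ} (T : UpDownTableau n) (len : ℕ) (k : ℤ) : ℤ :=
  (((Finset.Icc 1 len).filter fun t =>
    T.add t = true ∧ ((T.box t).2 : ℤ) - ((T.box t).1 : ℤ) = k).card : ℤ)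

/-- `d'_k` : the number of steps among the first `len` steps of `T` removing a box
on the diagonal `k`. -/
def dRem {n : ℕ} (T : UpDownTableau n) (len : ℕ) (k : ℤ) : ℤ :=
  (((Finset.Icc 1 len).filter fun t =>
    T.add t = false ∧ ((T.box t).2 : ℤ) - ((T.box t).1 : ℤ) = k).card : ℤ)

/-- `g_k = δ_{k0} + d_{k-1} + d_{k+1} - 2 d_k`. -/
def gAdd {n : ℕ} (T : UpDownTableau n) (len : ℕ) (k : ℤ) : ℤ :=
  (if k = 0 then 1 else 0) + dAdd T len (k-1) + dAdd T len (k+1) - 2 * dAdd T len k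

/-- `g'_k = d'_{k-1} + d'_{k+1} - 2 d'_k`. -/
def gRem {n : ℕ} (T : UpDownTableau n) (len : ℕ) (k : ℤ) : ℤ :=
  dRem T len (k-1) + dRem T len (k+1) - 2 * dRem T len k

/-- The diagonal `j - i` of the box of step `r`. -/
def diagOf {n : ℕ} (T : UpDownTableau n) (r : ℕ) : ℤ :=
  ((T.box r).2 : ℤ) - ((T.box r).1 : ℤ)

/-- The exponent `p_r` of an updown tableau: `p_r = 1 - g_{k_r}` if a box is added on the
diagonal `k_r` at step `r`, and `p_r = 1 - g'_{k_r}` if a box is removed, where `g, g'`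
are computed from the first `r - 1` steps. -/
def pExp {n : ℕ} (T : UpDownTableau n) (r : ℕ) : ℤ :=
  1 - (if T.add r then gAdd T (r-1) (diagOf T r) else gRem T (r-1) (diagOf T r))

/-- The factor `φ(U, T)` in the recursive definition of `f(T)`; the products over all
integers `k` are realized as products over `-r-1 ≤ k ≤ r+1`, which contains the support
of `g` and `g'` (all other factors are equal to 1). -/
def phiStep {n : ℕ} (T : UpDownTableau n) (r : ℕ) : F :=
  if T.add r then
    (∏ k ∈ (Finset.Icc (-(r:ℤ)-1) ((r:ℤ)+1)).erase (diagOf T r),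
      ((diagOf T r - k : ℤ) : F) ^ gAdd T (r-1) k) *
    ∏ k ∈ Finset.Icc (-(r:ℤ)-1) ((r:ℤ)+1),
      (((diagOf T r + k : ℤ) : F) + ωF - 1) ^ gRem T (r-1) k
  else
    (∏ k ∈ (Finset.Icc (-(r:ℤ)-1) ((r:ℤ)+1)).erase (diagOf T r),
      ((k - diagOf T r : ℤ) : F) ^ gRem T (r-1) k) *
    ∏ k ∈ Finset.Icc (-(r:ℤ)-1) ((r:ℤ)+1),
      ((1 : F) - ωF - ((diagOf T r + k : ℤ) : F)) ^ gAdd T (r-1) k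

/-- The scalar `f(T) ∈ ℂ(ω)`, defined recursively by `f(∅) = 1`, `f(T) = f(U) φ(U,T)`. -/
def fT {n : ℕ} (T : UpDownTableau n) : ℕ → F
  | 0 => 1
  | r + 1 => fT T r * phiStep T (r+1)

/-- The hook length of the box `b` in the Young diagram `μ`. -/
def hookLength (μ : YoungDiagram) (b : ℕ × ℕ) : ℕ :=
  (μ.cells.filter fun c => c.1 = b.1 ∧ b.2 < c.2).card +
  (μ.cells.filter fun c => c.2 = b.2 ∧ b.1 < c.1).card + 1

/-- The product of the hook lengths of all boxes of `μ`. -/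
def hookProd (μ : YoungDiagram) : ℕ :=
  ∏ b ∈ μ.cells, hookLength μ b

/-- Polynomials in the variables `u_1, u_2, …` over `F = ℂ(ω)`. -/
abbrev MvP : Type := MvPolynomial ℕ F

/-- The field `F(u_1, u_2, …)` of rational functions in the variables `u_r` over `ℂ(ω)`. -/
abbrev KK : Type := FractionRing MvP

/-- Substituting `u_r = c` into a polynomial in the `u`'s. -/
def substOne (r : ℕ) (c : F) : MvP →ₐ[F] MvP :=
  MvPolynomial.aeval fun t => if t = r then MvPolynomial.C c else MvPolynomial.X t

/-- The variable `u_r` as an element of `KK`. -/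
def uVar (r : ℕ) : KK := algebraMap MvP KK (MvPolynomial.X r)

/-- A constant (an element of `ℂ(ω)`) as an element of `KK`. -/
def cK (x : F) : KK := algebraMap MvP KK (MvPolynomial.C x)

/-- The element `ω` of `KK`. -/
def ωK : KK := cK ωF

/-- `RegK r c f v` : the rational function `f ∈ F(u_1, u_2, …)`, viewed as a rational
function of the variable `u_r`, is regular at `u_r = c`, with value `v` there. -/
def RegK (r : ℕ) (c : F) (f v : KK) : Prop :=
  ∃ p q : MvP, substOne r c q ≠ 0 ∧
    f = algebraMap MvP KK p / algebraMap MvP KK q ∧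
    v = algebraMap MvP KK (substOne r c p) / algebraMap MvP KK (substOne r c q)

/-- The subring of "constants": the subring generated by the `s_i`, `e_i` and the
scalars from `ℂ(ω)` (i.e. the copy of the Brauer algebra `B_n(ω)` inside `B_n(ω) ⊗ KK`). -/
def constSubK [Algebra KK A] (s e : ℕ → A) : Subring A :=
  Subring.closure (Set.range s ∪ Set.range e ∪ Set.range fun x : F => algebraMap KK A (cK x))

/-- `RegStep s e r c a v` : the element `a` of `B ⊗ F(u_1,…,u_n)`, viewed as a rational
function of `u_r`, is regular at `u_r = c` with value `v`: it can be written as a finite sum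
`a = ∑ f_i • b_i` with constant `b_i` and coordinates `f_i` regular at `u_r = c` (denominators
not vanishing at `u_r = c`), whose values at `u_r = c` give `v = ∑ f_i(c) • b_i`. -/
def RegStep [Algebra KK A] (s e : ℕ → A) (r : ℕ) (c : F) (a v : A) : Prop :=
  ∃ (m : ℕ) (f g : Fin m → KK) (b : Fin m → A),
    (∀ i, RegK r c (f i) (g i)) ∧ (∀ i, b i ∈ constSubK s e) ∧
    a = ∑ i, f i • b i ∧ v = ∑ i, g i • b i

end BrauerFusion

namespace BrauerFusionAux

/-- leg count for abstract row-length function -/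
def legCt (f : ℕ → ℕ) (m i j : ℕ) : ℕ :=
  ((Finset.Ioo i m).filter (fun i' => j < f i')).card

/-- abstract integer hook length -/
def zhook (f : ℕ → ℕ) (m i j : ℕ) : ℤ :=
  (f i : ℤ) - j + legCt f m i j

lemma telescope (a : ℕ) (C : ℤ) :
    (∏ j ∈ Finset.range a, (C + 1 - j)) * (C + 1 - a) =
      (C + 1) * ∏ j ∈ Finset.range a, (C - j) := by
  induction a with
  | zero => simp
  | succ a ih =>
    rw [Finset.prod_range_succ, Finset.prod_range_succ]
    push_cast
    have : (∏ j ∈ Finset.range a, (C + 1 - (j:ℤ))) * (C + 1 - a) * (C - a)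
        = (C + 1) * (∏ j ∈ Finset.range a, (C - (j:ℤ))) * (C - a) := by rw [ih]
    push_cast at this ⊢
    linear_combination this

lemma prod_desc_fact : ∀ a : ℕ, ∏ j ∈ Finset.range a, ((a : ℤ) - j) = a.factorial := by
  intro a
  induction a with
  | zero => simp
  | succ a ih =>
    rw [Finset.prod_range_succ']
    have h1 : ∀ j ∈ Finset.range a, ((a+1 : ℤ) - ((j:ℕ)+1 : ℕ)) = (a:ℤ) - j := by
      intro j hj; push_cast; ring
    push_cast
    have h2 : (∏ j ∈ Finset.range a, ((a:ℤ) + 1 - ((j:ℤ) + 1)))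
        = ∏ j ∈ Finset.range a, ((a:ℤ) - j) := Finset.prod_congr rfl (fun j _ => by ring)
    rw [h2, ih]
    push_cast [Nat.factorial_succ]
    ring

lemma fact_prod (a b : ℕ) :
    (b.factorial : ℤ) * ∏ x ∈ Finset.range a, ((b : ℤ) + 1 + x) = ((b + a).factorial : ℤ) := by
  induction a with
  | zero => simp
  | succ a ih =>
    rw [Finset.prod_range_succ, ← mul_assoc, ih]
    push_cast [← Nat.add_assoc, Nat.factorial_succ]
    ring

end BrauerFusionAux

namespace BrauerFusion2
open BrauerFusion BrauerFusionAux

def Nn (f : ℕ → ℕ) (m t : ℕ) : ℕ := f t + (m - 1 - t)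

lemma rowHook_prod (m : ℕ) (B : ℕ) : ∀ (f : ℕ → ℕ), (∀ a b : ℕ, a ≤ b → f b ≤ f a) →
    (∀ t, m ≤ t → f t = 0) → ∀ i, i < m → (∑ i' ∈ Finset.Ioo i m, f i') = B →
    (∏ j ∈ Finset.range (f i), zhook f m i j) *
      (∏ i' ∈ Finset.Ioo i m, ((Nn f m i : ℤ) - (Nn f m i' : ℤ)))
    = ((Nn f m i).factorial : ℤ) := by
  induction B using Nat.strong_induction_on with
  | _ B IH =>
  intro f hanti hvan i him hsum
  by_cases hB : B = 0
  · -- base case : all rows below i vanish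
    subst hB
    have hz : ∀ i' ∈ Finset.Ioo i m, f i' = 0 :=
      (Finset.sum_eq_zero_iff).1 hsum
    have hleg : ∀ j, legCt f m i j = 0 := by
      intro j
      unfold legCt
      rw [Finset.card_eq_zero, Finset.filter_eq_empty_iff]
      intro i' hi'
      rw [hz i' hi']
      omega
    have h1 : (∏ j ∈ Finset.range (f i), zhook f m i j)
        = ∏ j ∈ Finset.range (f i), ((f i : ℤ) - j) := by
      refine Finset.prod_congr rfl fun j _ => ?_
      unfold zhook; rw [hleg]; push_cast; ring
    have h2 : (∏ i' ∈ Finset.Ioo i m, ((Nn f m i : ℤ) - (Nn f m i' : ℤ)))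
        = ∏ x ∈ Finset.range (m - (i+1)), ((f i : ℤ) + 1 + x) := by
      have hIoo : Finset.Ioo i m = Finset.Ico (i+1) m := by
        ext x; simp only [Finset.mem_Ioo, Finset.mem_Ico]; omega
      rw [hIoo, Finset.prod_Ico_eq_prod_range]
      · refine Finset.prod_congr rfl fun x hx => ?_
        rw [Finset.mem_range] at hx
        have hz' : f (i + 1 + x) = 0 := by
          apply hz
          rw [Finset.mem_Ioo]; omega
        unfold Nn
        rw [hz']
        push_cast [Nat.cast_sub, Nat.sub_sub]
        omega
    rw [h1, h2, prod_desc_fact, fact_prod]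
    have : f i + (m - (i+1)) = Nn f m i := by unfold Nn; omega
    rw [this]
  · -- inductive step
    have hne : ((Finset.Ioo i m).filter (fun i' => f i' ≠ 0)).Nonempty := by
      by_contra hcon
      rw [Finset.not_nonempty_iff_eq_empty, Finset.filter_eq_empty_iff] at hcon
      apply hB
      rw [← hsum]
      exact Finset.sum_eq_zero fun i' hi' => by
        by_contra h'; exact hcon hi' h'
    set t := ((Finset.Ioo i m).filter (fun i' => f i' ≠ 0)).max' hne with ht_def
    have ht_mem' := ((Finset.Ioo i m).filter (fun i' => f i' ≠ 0)).max'_mem hne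
    rw [Finset.mem_filter, Finset.mem_Ioo] at ht_mem'
    obtain ⟨⟨hit, htm⟩, hft⟩ := ht_mem'
    have ht_mem : t ∈ Finset.Ioo i m := Finset.mem_Ioo.2 ⟨hit, htm⟩
    have hafter : ∀ i', t < i' → f i' = 0 := by
      intro i' hti'
      by_cases hi'm : m ≤ i'
      · exact hvan i' hi'm
      · by_contra h'
        have : i' ∈ (Finset.Ioo i m).filter (fun i' => f i' ≠ 0) := by
          rw [Finset.mem_filter, Finset.mem_Ioo]
          exact ⟨⟨lt_trans hit hti', lt_of_not_ge hi'm⟩, h'⟩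
        have := Finset.le_max' _ _ this
        omega
    set f' := Function.update f t 0 with hf'_def
    have hf'i : f' i = f i := Function.update_of_ne (by omega) _ _
    have hf'ne : ∀ i', i' ≠ t → f' i' = f i' := fun i' h => Function.update_of_ne h _ _
    have hf't : f' t = 0 := Function.update_self _ _ _
    have hanti' : ∀ a b : ℕ, a ≤ b → f' b ≤ f' a := by
      intro a b hab
      by_cases hbt : b = t
      · rw [hbt, hf't]; omega
      · rw [hf'ne b hbt]
        by_cases hat : a = t
        · have : f b = 0 := hafter b (by omega)
          omega
        · rw [hf'ne a hat]; exact hanti a b hab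
    have hvan' : ∀ s, m ≤ s → f' s = 0 := by
      intro s hs
      by_cases hst : s = t
      · rw [hst, hf't]
      · rw [hf'ne s hst]; exact hvan s hs
    have hsum' : (∑ i' ∈ Finset.Ioo i m, f' i') = B - f t := by
      have h1 : (∑ i' ∈ Finset.Ioo i m, f' i') + f t = ∑ i' ∈ Finset.Ioo i m, f i' := by
        rw [hf'_def, Finset.sum_update_of_mem ht_mem, zero_add, ← Finset.erase_eq,
          add_comm, Finset.add_sum_erase _ f ht_mem]
      omega
    have hftB : f t ≤ B := by
      rw [← hsum]
      exact Finset.single_le_sum (f := f) (fun _ _ => Nat.zero_le _) ht_mem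
    have ihf' := IH (B - f t) (Nat.sub_lt (Nat.pos_of_ne_zero hB) (Nat.pos_of_ne_zero hft)) f' hanti' hvan' i him hsum'
    -- key facts
    have hK1 : ∀ j, legCt f m i j = legCt f' m i j + (if j < f t then 1 else 0) := by
      intro j
      have hset : (Finset.Ioo i m).filter (fun i' => j < f' i')
          = ((Finset.Ioo i m).filter (fun i' => j < f i')).erase t := by
        ext i'
        rw [Finset.mem_erase, Finset.mem_filter, Finset.mem_filter]
        constructor
        · intro ⟨h1, h2⟩
          have hi't : i' ≠ t := by
            intro h; rw [h, hf't] at h2; omega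
          rw [hf'ne i' hi't] at h2
          exact ⟨hi't, h1, h2⟩
        · intro ⟨h1, h2, h3⟩
          rw [← hf'ne i' h1] at h3
          exact ⟨h2, h3⟩
      unfold legCt
      rw [hset]
      by_cases hj : j < f t
      · have htmem : t ∈ (Finset.Ioo i m).filter (fun i' => j < f i') := by
          rw [Finset.mem_filter]; exact ⟨ht_mem, hj⟩
        rw [Finset.card_erase_of_mem htmem, if_pos hj]
        have : 1 ≤ ((Finset.Ioo i m).filter (fun i' => j < f i')).card :=
          Finset.card_pos.2 ⟨t, htmem⟩
        omega
      · have htmem : t ∉ (Finset.Ioo i m).filter (fun i' => j < f i') := by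
          rw [Finset.mem_filter]; tauto
        rw [Finset.erase_eq_of_notMem htmem, if_neg hj]
        omega
    have hK2 : ∀ j, j < f t → legCt f' m i j = t - i - 1 := by
      intro j hj
      unfold legCt
      have : (Finset.Ioo i m).filter (fun i' => j < f' i') = Finset.Ioo i t := by
        ext i'
        rw [Finset.mem_filter, Finset.mem_Ioo, Finset.mem_Ioo]
        constructor
        · intro ⟨⟨h1, h2⟩, h3⟩
          refine ⟨h1, ?_⟩
          by_contra hcon
          have hi't : i' ≠ t := by
            intro h; rw [h, hf't] at h3; omega
          rw [hf'ne i' hi't] at h3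
          have : f i' = 0 := hafter i' (by omega)
          omega
        · intro ⟨h1, h2⟩
          have hi't : i' ≠ t := by omega
          rw [hf'ne i' hi't]
          have : f t ≤ f i' := hanti i' t (by omega)
          exact ⟨⟨h1, by omega⟩, by omega⟩
      rw [this, Nat.card_Ioo]
    set C : ℤ := (f i : ℤ) + ((t - i - 1 : ℕ) : ℤ) with hC_def
    have hZ1 : ∀ j ∈ Finset.range (f t), zhook f m i j = C + 1 - j := by
      intro j hj
      rw [Finset.mem_range] at hj
      unfold zhook
      rw [hK1 j, hK2 j hj, if_pos hj]
      push_cast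
      ring
    have hZ1' : ∀ j ∈ Finset.range (f t), zhook f' m i j = C - j := by
      intro j hj
      rw [Finset.mem_range] at hj
      unfold zhook
      rw [hf'i, hK2 j hj]
      push_cast
      ring
    have hZ2 : ∀ j ∈ Finset.Ico (f t) (f i), zhook f m i j = zhook f' m i j := by
      intro j hj
      rw [Finset.mem_Ico] at hj
      unfold zhook
      rw [hf'i, hK1 j, if_neg (by omega)]
      push_cast
      ring
    have hft_le : f t ≤ f i := hanti i t (by omega)
    -- split products
    have hsplit : ∀ g : ℕ → ℤ, (∏ j ∈ Finset.range (f i), g j)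
        = (∏ j ∈ Finset.range (f t), g j) * ∏ j ∈ Finset.Ico (f t) (f i), g j := by
      intro g
      simp only [Finset.range_eq_Ico]
      exact (Finset.prod_Ico_consecutive g (Nat.zero_le (f t)) hft_le).symm
    have hpair : ∀ g : ℕ → ℕ, (∏ i' ∈ Finset.Ioo i m, ((Nn g m i : ℤ) - (Nn g m i' : ℤ)))
        = (∏ i' ∈ (Finset.Ioo i m).erase t, ((Nn g m i : ℤ) - (Nn g m i' : ℤ)))
          * ((Nn g m i : ℤ) - (Nn g m t : ℤ)) :=
      fun g => (Finset.prod_erase_mul _ _ ht_mem).symm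
    have hE : (∏ i' ∈ (Finset.Ioo i m).erase t, ((Nn f m i : ℤ) - (Nn f m i' : ℤ)))
        = ∏ i' ∈ (Finset.Ioo i m).erase t, ((Nn f' m i : ℤ) - (Nn f' m i' : ℤ)) := by
      refine Finset.prod_congr rfl fun i' hi' => ?_
      rw [Finset.mem_erase] at hi'
      unfold Nn
      rw [hf'i, hf'ne i' hi'.1]
    have hNt : (Nn f m i : ℤ) - (Nn f m t : ℤ) = C + 1 - f t := by
      unfold Nn
      rw [hC_def]
      omega
    have hNt' : (Nn f' m i : ℤ) - (Nn f' m t : ℤ) = C + 1 := by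
      unfold Nn
      rw [hf'i, hf't, hC_def]
      omega
    calc (∏ j ∈ Finset.range (f i), zhook f m i j) *
          (∏ i' ∈ Finset.Ioo i m, ((Nn f m i : ℤ) - (Nn f m i' : ℤ)))
        = ((∏ j ∈ Finset.range (f t), (C + 1 - (j:ℤ))) * (C + 1 - (f t : ℤ))) *
          ((∏ j ∈ Finset.Ico (f t) (f i), zhook f' m i j) *
           (∏ i' ∈ (Finset.Ioo i m).erase t, ((Nn f' m i : ℤ) - (Nn f' m i' : ℤ)))) := by
          rw [hsplit (zhook f m i), hpair f, hNt, hE,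
            Finset.prod_congr rfl hZ1, Finset.prod_congr rfl hZ2]
          ring
      _ = ((C + 1) * (∏ j ∈ Finset.range (f t), (C - (j:ℤ)))) *
          ((∏ j ∈ Finset.Ico (f t) (f i), zhook f' m i j) *
           (∏ i' ∈ (Finset.Ioo i m).erase t, ((Nn f' m i : ℤ) - (Nn f' m i' : ℤ)))) := by
          rw [telescope]
      _ = (∏ j ∈ Finset.range (f' i), zhook f' m i j) *
          (∏ i' ∈ Finset.Ioo i m, ((Nn f' m i : ℤ) - (Nn f' m i' : ℤ))) := by
          rw [hf'i, hsplit (zhook f' m i), hpair f', hNt',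
            ← Finset.prod_congr rfl hZ1']
          ring
      _ = ((Nn f' m i).factorial : ℤ) := ihf'
      _ = ((Nn f m i).factorial : ℤ) := by unfold Nn; rw [hf'i]

end BrauerFusion2

namespace BrauerFusion3
open BrauerFusion BrauerFusionAux BrauerFusion2

lemma card_lt_of_rowLen_pos (μ : YoungDiagram) (t : ℕ) (h : 0 < μ.rowLen t) : t < μ.card := by
  have hsub : (Finset.range (t+1)).image (fun s => (s, 0)) ⊆ μ.cells := by
    intro c hc
    simp only [Finset.mem_image, Finset.mem_range] at hc
    obtain ⟨s, hs, rfl⟩ := hc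
    rw [YoungDiagram.mem_cells]
    exact μ.up_left_mem (by omega) (le_refl 0) (YoungDiagram.mem_iff_lt_rowLen.2 h)
  have hle := Finset.card_le_card hsub
  rwa [Finset.card_image_of_injective _ (fun a b hab => by injection hab),
    Finset.card_range] at hle

lemma rowLen_zero_of_card_le (μ : YoungDiagram) (t : ℕ) (h : μ.card ≤ t) : μ.rowLen t = 0 := by
  by_contra hcon
  have := card_lt_of_rowLen_pos μ t (Nat.pos_of_ne_zero hcon)
  omega

lemma hook_eq_zhook (μ : YoungDiagram) (m i j : ℕ) (hmem : (i, j) ∈ μ)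
    (hvan : ∀ t, m ≤ t → μ.rowLen t = 0) :
    (hookLength μ (i, j) : ℤ) = zhook μ.rowLen m i j := by
  have hj : j < μ.rowLen i := YoungDiagram.mem_iff_lt_rowLen.1 hmem
  have harm : μ.cells.filter (fun c => c.1 = i ∧ j < c.2)
      = (Finset.Ico (j+1) (μ.rowLen i)).image (fun b => (i, b)) := by
    ext ⟨a, b⟩
    simp only [Finset.mem_filter, YoungDiagram.mem_cells, Finset.mem_image, Finset.mem_Ico]
    constructor
    · rintro ⟨hmem', rfl, hjb⟩
      exact ⟨b, ⟨by omega, YoungDiagram.mem_iff_lt_rowLen.1 hmem'⟩, rfl⟩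
    · rintro ⟨x, ⟨hx1, hx2⟩, heq⟩
      obtain ⟨rfl, rfl⟩ := Prod.mk.injEq _ _ _ _ ▸ heq
      exact ⟨YoungDiagram.mem_iff_lt_rowLen.2 hx2, rfl, by omega⟩
  have hleg : μ.cells.filter (fun c => c.2 = j ∧ i < c.1)
      = ((Finset.Ioo i m).filter fun a => j < μ.rowLen a).image (fun a => (a, j)) := by
    ext ⟨a, b⟩
    simp only [Finset.mem_filter, YoungDiagram.mem_cells, Finset.mem_image, Finset.mem_Ioo]
    constructor
    · rintro ⟨hmem', rfl, hia⟩
      have hra : b < μ.rowLen a := YoungDiagram.mem_iff_lt_rowLen.1 hmem'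
      have ham : a < m := by
        by_contra hcon
        rw [hvan a (by omega)] at hra; omega
      exact ⟨a, ⟨⟨hia, ham⟩, hra⟩, rfl⟩
    · rintro ⟨x, ⟨⟨hx1, _⟩, hx2⟩, heq⟩
      obtain ⟨rfl, rfl⟩ := Prod.mk.injEq _ _ _ _ ▸ heq
      exact ⟨YoungDiagram.mem_iff_lt_rowLen.2 hx2, rfl, hx1⟩
  have harm' : (μ.cells.filter (fun c => c.1 = i ∧ j < c.2)).card = μ.rowLen i - (j+1) := by
    rw [harm, Finset.card_image_of_injective _ (fun a b hab => by injection hab),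
      Nat.card_Ico]
  have hleg' : (μ.cells.filter (fun c => c.2 = j ∧ i < c.1)).card = legCt μ.rowLen m i j := by
    rw [hleg, Finset.card_image_of_injective _ (fun a b hab => by injection hab)]
    rfl
  unfold hookLength zhook
  simp only
  rw [harm', hleg']
  push_cast
  omega

lemma hookProd_global (μ : YoungDiagram) (m : ℕ) (hvan : ∀ t, m ≤ t → μ.rowLen t = 0) :
    (hookProd μ : ℤ) *
      ∏ i ∈ Finset.range m, ∏ i' ∈ Finset.Ioo i m,
        ((Nn μ.rowLen m i : ℤ) - (Nn μ.rowLen m i' : ℤ))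
    = ∏ i ∈ Finset.range m, ((Nn μ.rowLen m i).factorial : ℤ) := by
  have hcells : μ.cells = (Finset.range m).biUnion (fun i => μ.row i) := by
    ext ⟨a, b⟩
    simp only [Finset.mem_biUnion, Finset.mem_range, YoungDiagram.mem_row_iff,
      YoungDiagram.mem_cells]
    constructor
    · intro h
      have hra : b < μ.rowLen a := YoungDiagram.mem_iff_lt_rowLen.1 h
      have ham : a < m := by
        by_contra hcon
        rw [hvan a (by omega)] at hra; omega
      exact ⟨a, ham, h, rfl⟩
    · rintro ⟨x, _, h, rfl⟩
      exact h
  have hdisj : Set.PairwiseDisjoint (Finset.range m : Set ℕ) (fun i => μ.row i) := by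
    intro x _ y _ hxy
    rw [Function.onFun, Finset.disjoint_left]
    intro c hc hc'
    rw [YoungDiagram.mem_row_iff] at hc hc'
    exact hxy (hc.2 ▸ hc'.2)
  have hrowprod : ∀ i, (∏ c ∈ μ.row i, (hookLength μ c : ℤ))
      = ∏ j ∈ Finset.range (μ.rowLen i), (hookLength μ (i, j) : ℤ) := by
    intro i
    rw [YoungDiagram.row_eq_prod, Finset.prod_product]
    simp
  have h1 : (hookProd μ : ℤ) = ∏ i ∈ Finset.range m,
      ∏ j ∈ Finset.range (μ.rowLen i), (hookLength μ (i, j) : ℤ) := by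
    unfold hookProd
    push_cast
    rw [hcells, Finset.prod_biUnion hdisj]
    exact Finset.prod_congr rfl fun i _ => hrowprod i
  have h2 : ∀ i ∈ Finset.range m,
      (∏ j ∈ Finset.range (μ.rowLen i), (hookLength μ (i, j) : ℤ)) *
        (∏ i' ∈ Finset.Ioo i m, ((Nn μ.rowLen m i : ℤ) - (Nn μ.rowLen m i' : ℤ)))
      = ((Nn μ.rowLen m i).factorial : ℤ) := by
    intro i hi
    rw [Finset.mem_range] at hi
    have hzh : ∀ j ∈ Finset.range (μ.rowLen i), (hookLength μ (i, j) : ℤ)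
        = zhook μ.rowLen m i j := fun j hj =>
      hook_eq_zhook μ m i j (YoungDiagram.mem_iff_lt_rowLen.2 (Finset.mem_range.1 hj)) hvan
    rw [Finset.prod_congr rfl hzh]
    exact rowHook_prod m _ μ.rowLen (fun a b hab => μ.rowLen_anti a b hab) hvan i hi rfl
  rw [h1, ← Finset.prod_mul_distrib]
  exact Finset.prod_congr rfl h2

end BrauerFusion3

namespace BrauerFusion4
open BrauerFusion BrauerFusionAux BrauerFusion2 BrauerFusion3

def DiaZ (μ : YoungDiagram) (k : ℤ) : ℤ :=
  ((μ.cells.filter fun b => (b.2 : ℤ) - b.1 = k).card : ℤ)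

def gD (μ : YoungDiagram) (k : ℤ) : ℤ :=
  (if k = 0 then 1 else 0) + DiaZ μ (k-1) + DiaZ μ (k+1) - 2 * DiaZ μ k

def lp (μ : YoungDiagram) (i' : ℕ) : ℤ := (μ.rowLen i' : ℤ) - i'

lemma DiaZ_row (μ : YoungDiagram) (m : ℕ) (hvan : ∀ t, m ≤ t → μ.rowLen t = 0) (k : ℤ) :
    DiaZ μ k = ∑ i' ∈ Finset.range m,
      (if 0 ≤ k + i' ∧ k + i' < (μ.rowLen i' : ℤ) then (1:ℤ) else 0) := by
  have hset : μ.cells.filter (fun b => (b.2 : ℤ) - b.1 = k)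
      = ((Finset.range m).filter (fun i' : ℕ => 0 ≤ k + (i':ℤ) ∧ k + (i':ℤ) < (μ.rowLen i' : ℤ))).image
          (fun i' : ℕ => (i', (k + (i':ℤ)).toNat)) := by
    ext ⟨a, b⟩
    simp only [Finset.mem_filter, YoungDiagram.mem_cells, Finset.mem_image, Finset.mem_range]
    constructor
    · rintro ⟨hmem', hk⟩
      have hra : b < μ.rowLen a := YoungDiagram.mem_iff_lt_rowLen.1 hmem'
      have ham : a < m := by
        by_contra hcon
        rw [hvan a (by omega)] at hra; omega
      refine ⟨a, ⟨ham, by omega, by omega⟩, ?_⟩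
      have : (k + a).toNat = b := by omega
      rw [this]
    · rintro ⟨x, ⟨hxm, hx0, hxr⟩, heq⟩
      obtain ⟨rfl, rfl⟩ := Prod.mk.injEq _ _ _ _ ▸ heq
      constructor
      · exact YoungDiagram.mem_iff_lt_rowLen.2 (by omega)
      · omega
  unfold DiaZ
  rw [hset, Finset.card_image_of_injective _ (fun a b hab => by injection hab),
    Finset.card_filter]
  push_cast
  exact Finset.sum_congr rfl fun i' _ => by split_ifs <;> simp

lemma gD_rep (μ : YoungDiagram) (m : ℕ) (hvan : ∀ t, m ≤ t → μ.rowLen t = 0) (k : ℤ) :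
    gD μ k = (if k = -(m:ℤ) then 1 else 0) +
      ∑ i' ∈ Finset.range m,
        ((if k = lp μ i' then (1:ℤ) else 0) - (if k = lp μ i' - 1 then 1 else 0)) := by
  unfold gD
  rw [DiaZ_row μ m hvan (k-1), DiaZ_row μ m hvan (k+1), DiaZ_row μ m hvan k]
  have hper : ∀ i' ∈ Finset.range m,
      ((if 0 ≤ (k-1) + i' ∧ (k-1) + i' < (μ.rowLen i' : ℤ) then (1:ℤ) else 0) +
       (if 0 ≤ (k+1) + i' ∧ (k+1) + i' < (μ.rowLen i' : ℤ) then (1:ℤ) else 0) -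
       2 * (if 0 ≤ k + i' ∧ k + i' < (μ.rowLen i' : ℤ) then (1:ℤ) else 0))
      = (((if k = -((i'+1 : ℕ):ℤ) then (1:ℤ) else 0) - (if k = -((i' : ℕ):ℤ) then 1 else 0)) +
         ((if k = lp μ i' then (1:ℤ) else 0) - (if k = lp μ i' - 1 then 1 else 0))) := by
    intro i' _
    unfold lp
    push_cast
    split_ifs <;> omega
  have hsum : ∑ i' ∈ Finset.range m,
      ((if 0 ≤ (k-1) + i' ∧ (k-1) + i' < (μ.rowLen i' : ℤ) then (1:ℤ) else 0) +
       (if 0 ≤ (k+1) + i' ∧ (k+1) + i' < (μ.rowLen i' : ℤ) then (1:ℤ) else 0) -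
       2 * (if 0 ≤ k + i' ∧ k + i' < (μ.rowLen i' : ℤ) then (1:ℤ) else 0))
      = ((if k = -((m : ℕ):ℤ) then (1:ℤ) else 0) - (if k = -((0 : ℕ):ℤ) then 1 else 0)) +
        ∑ i' ∈ Finset.range m,
          ((if k = lp μ i' then (1:ℤ) else 0) - (if k = lp μ i' - 1 then 1 else 0)) := by
    rw [Finset.sum_congr rfl hper, Finset.sum_add_distrib,
      Finset.sum_range_sub (fun i' => (if k = -((i' : ℕ):ℤ) then (1:ℤ) else 0))]
  have hexp : ∑ i' ∈ Finset.range m,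
        (if 0 ≤ (k-1) + i' ∧ (k-1) + i' < (μ.rowLen i' : ℤ) then (1:ℤ) else 0) +
      ∑ i' ∈ Finset.range m,
        (if 0 ≤ (k+1) + i' ∧ (k+1) + i' < (μ.rowLen i' : ℤ) then (1:ℤ) else 0) -
      2 * ∑ i' ∈ Finset.range m,
        (if 0 ≤ k + i' ∧ k + i' < (μ.rowLen i' : ℤ) then (1:ℤ) else 0)
      = ∑ i' ∈ Finset.range m,
      ((if 0 ≤ (k-1) + i' ∧ (k-1) + i' < (μ.rowLen i' : ℤ) then (1:ℤ) else 0) +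
       (if 0 ≤ (k+1) + i' ∧ (k+1) + i' < (μ.rowLen i' : ℤ) then (1:ℤ) else 0) -
       2 * (if 0 ≤ k + i' ∧ k + i' < (μ.rowLen i' : ℤ) then (1:ℤ) else 0)) := by
    rw [Finset.sum_sub_distrib, Finset.sum_add_distrib, Finset.mul_sum]
  have h0 : (if k = -((0 : ℕ):ℤ) then (1:ℤ) else 0) = (if k = 0 then (1:ℤ) else 0) := by
    norm_num
  linarith [hexp, hsum, h0]

end BrauerFusion4

namespace BrauerFusion5
open BrauerFusion BrauerFusionAux BrauerFusion2 BrauerFusion3 BrauerFusion4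

lemma rowLen_eq_of (μ : YoungDiagram) (i r : ℕ) (hmem : ∀ b, (i, b) ∈ μ ↔ b < r) :
    μ.rowLen i = r := by
  have h1 : ¬ (r < μ.rowLen i) := fun h =>
    absurd ((hmem r).1 (YoungDiagram.mem_iff_lt_rowLen.2 h)) (lt_irrefl r)
  have h2 : ¬ (μ.rowLen i < r) := fun h =>
    absurd (YoungDiagram.mem_iff_lt_rowLen.1 ((hmem _).2 h)) (lt_irrefl _)
  omega

section Addable

variable {μ ν : YoungDiagram} {i j : ℕ}
  (hn : (i, j) ∉ μ) (hins : ν.cells = insert (i, j) μ.cells)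

include hn hins

lemma mem_nu : ∀ a b, ((a, b) ∈ ν ↔ (a, b) = (i, j) ∨ (a, b) ∈ μ) := by
  intro a b
  rw [← YoungDiagram.mem_cells, hins, Finset.mem_insert, YoungDiagram.mem_cells]

lemma mem_nu_self : (i, j) ∈ ν := (mem_nu hn hins i j).2 (Or.inl rfl)

lemma rowLen_mu_i : μ.rowLen i = j := by
  apply rowLen_eq_of
  intro b
  constructor
  · intro hb
    rcases Nat.lt_trichotomy b j with h | h | h
    · exact h
    · exact absurd (h ▸ hb) hn
    · exact absurd (μ.up_left_mem (le_refl i) (le_of_lt h) hb) hn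
  · intro hb
    have hbν : (i, b) ∈ ν := ν.up_left_mem (le_refl i) (by omega) (mem_nu_self hn hins)
    rcases (mem_nu hn hins i b).1 hbν with h | h
    · injection h with h1 h2; omega
    · exact h

lemma rowLen_nu_i : ν.rowLen i = j + 1 := by
  apply rowLen_eq_of
  intro b
  constructor
  · intro hb
    rcases (mem_nu hn hins i b).1 hb with h | h
    · injection h with h1 h2
      omega
    · have := YoungDiagram.mem_iff_lt_rowLen.1 h
      rw [rowLen_mu_i hn hins] at this
      omega
  · intro hb
    exact ν.up_left_mem (le_refl i) (by omega) (mem_nu_self hn hins)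

lemma rowLen_nu_ne : ∀ i', i' ≠ i → ν.rowLen i' = μ.rowLen i' := by
  intro i' hi'
  apply rowLen_eq_of
  intro b
  rw [← YoungDiagram.mem_iff_lt_rowLen]
  rw [mem_nu hn hins i' b]
  constructor
  · rintro (h | h)
    · exact absurd h (by simp [hi'])
    · exact h
  · exact Or.inr

lemma rowLen_mu_prev : ∀ i', i' < i → j + 1 ≤ μ.rowLen i' := by
  intro i' hi'
  have hν : (i', j) ∈ ν := ν.up_left_mem (by omega) (le_refl j) (mem_nu_self hn hins)
  rcases (mem_nu hn hins i' j).1 hν with h | h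
  · injection h with h1 h2; omega
  · have := YoungDiagram.mem_iff_lt_rowLen.1 h
    omega

lemma card_nu : ν.card = μ.card + 1 := by
  show ν.cells.card = μ.cells.card + 1
  rw [hins, Finset.card_insert_of_notMem (by rwa [YoungDiagram.mem_cells])]

lemma i_le_card : i ≤ μ.card := by
  rcases Nat.eq_zero_or_pos i with h | h
  · omega
  · have := card_lt_of_rowLen_pos μ (i-1)
      (by have := rowLen_mu_prev hn hins (i-1) (by omega); omega)
    omega

lemma j_le_card : j ≤ μ.card := by
  have hsub : (Finset.range j).image (fun b => (i, b)) ⊆ μ.cells := by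
    intro c hc
    simp only [Finset.mem_image, Finset.mem_range] at hc
    obtain ⟨b, hb, rfl⟩ := hc
    rw [YoungDiagram.mem_cells, YoungDiagram.mem_iff_lt_rowLen, rowLen_mu_i hn hins]
    omega
  have := Finset.card_le_card hsub
  rwa [Finset.card_image_of_injective _ (fun a b hab => by injection hab),
    Finset.card_range] at this

end Addable

lemma rowLen_le_card (μ : YoungDiagram) (i : ℕ) : μ.rowLen i ≤ μ.card := by
  rw [YoungDiagram.rowLen_eq_card]
  exact Finset.card_le_card (fun c hc => (YoungDiagram.mem_row_iff.1 hc).1)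

lemma lp_strictanti (μ : YoungDiagram) {i1 i2 : ℕ} (h : i1 < i2) :
    BrauerFusion4.lp μ i2 < BrauerFusion4.lp μ i1 := by
  have := μ.rowLen_anti i1 i2 (le_of_lt h)
  unfold BrauerFusion4.lp
  omega

lemma pair_update (N N' : ℕ → ℤ) (m i : ℕ) (him : i < m)
    (hupd : ∀ i' , i' < m → N' i' = if i' = i then N i + 1 else N i') :
    (∏ i1 ∈ Finset.range m, ∏ i2 ∈ Finset.Ioo i1 m, (N' i1 - N' i2)) *
      (∏ i' ∈ (Finset.range m).erase i, (N i - N i'))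
    = (∏ i1 ∈ Finset.range m, ∏ i2 ∈ Finset.Ioo i1 m, (N i1 - N i2)) *
      (∏ i' ∈ (Finset.range m).erase i, (N i + 1 - N i')) := by
  have herase : (Finset.range m).erase i = Finset.range i ∪ Finset.Ioo i m := by
    ext x
    simp only [Finset.mem_erase, Finset.mem_union, Finset.mem_range, Finset.mem_Ioo]
    omega
  have hdisj : Disjoint (Finset.range i) (Finset.Ioo i m) := by
    rw [Finset.disjoint_left]
    intro x hx hx'
    rw [Finset.mem_range] at hx
    rw [Finset.mem_Ioo] at hx'
    omega
  have houter : ∀ g : ℕ → ℤ, (∏ i1 ∈ Finset.range m, g i1)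
      = ((∏ i1 ∈ Finset.range i, g i1) * (∏ i1 ∈ Finset.Ioo i m, g i1)) * g i := by
    intro g
    rw [← Finset.prod_erase_mul _ g (Finset.mem_range.2 him), herase,
      Finset.prod_union hdisj]
  have hNi : N' i = N i + 1 := by rw [hupd i him, if_pos rfl]
  have hNne : ∀ i', i' < m → i' ≠ i → N' i' = N i' := by
    intro i' h1 h2
    rw [hupd i' h1, if_neg h2]
  have hFi : (∏ i2 ∈ Finset.Ioo i m, (N' i - N' i2)) =
      ∏ i2 ∈ Finset.Ioo i m, (N i + 1 - N i2) := by
    refine Finset.prod_congr rfl fun i2 h2 => ?_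
    rw [Finset.mem_Ioo] at h2
    rw [hNi, hNne i2 h2.2 (by omega)]
  have hFmid : ∀ i1 ∈ Finset.Ioo i m, (∏ i2 ∈ Finset.Ioo i1 m, (N' i1 - N' i2))
      = ∏ i2 ∈ Finset.Ioo i1 m, (N i1 - N i2) := by
    intro i1 h1
    rw [Finset.mem_Ioo] at h1
    refine Finset.prod_congr rfl fun i2 h2 => ?_
    rw [Finset.mem_Ioo] at h2
    rw [hNne i1 h1.2 (by omega), hNne i2 h2.2 (by omega)]
  have hFlow : ∀ i1 ∈ Finset.range i, (∏ i2 ∈ Finset.Ioo i1 m, (N' i1 - N' i2))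
      = (∏ i2 ∈ (Finset.Ioo i1 m).erase i, (N i1 - N i2)) * (N i1 - (N i + 1)) := by
    intro i1 h1
    rw [Finset.mem_range] at h1
    have hiIoo : i ∈ Finset.Ioo i1 m := Finset.mem_Ioo.2 ⟨h1, him⟩
    rw [← Finset.prod_erase_mul _ _ hiIoo]
    refine congrArg₂ (· * ·) (Finset.prod_congr rfl fun i2 h2 => ?_) ?_
    · rw [Finset.mem_erase, Finset.mem_Ioo] at h2
      rw [hNne i1 (by omega) (by omega), hNne i2 h2.2.2 h2.1]
    · rw [hNne i1 (by omega) (by omega), hNi]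
  have hFlowμ : ∀ i1 ∈ Finset.range i, (∏ i2 ∈ Finset.Ioo i1 m, (N i1 - N i2))
      = (∏ i2 ∈ (Finset.Ioo i1 m).erase i, (N i1 - N i2)) * (N i1 - N i) := by
    intro i1 h1
    rw [Finset.mem_range] at h1
    exact (Finset.prod_erase_mul _ _ (Finset.mem_Ioo.2 ⟨h1, him⟩)).symm
  rw [houter (fun i1 => ∏ i2 ∈ Finset.Ioo i1 m, (N' i1 - N' i2)),
    houter (fun i1 => ∏ i2 ∈ Finset.Ioo i1 m, (N i1 - N i2)),
    herase, Finset.prod_union hdisj, Finset.prod_union hdisj]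
  rw [hFi, Finset.prod_congr rfl hFmid, Finset.prod_congr rfl hFlow,
    Finset.prod_congr rfl hFlowμ, Finset.prod_mul_distrib, Finset.prod_mul_distrib]
  have hswap : (∏ i1 ∈ Finset.range i, (N i1 - (N i + 1))) *
      (∏ i1 ∈ Finset.range i, (N i - N i1))
      = (∏ i1 ∈ Finset.range i, (N i1 - N i)) *
        (∏ i1 ∈ Finset.range i, (N i + 1 - N i1)) := by
    rw [← Finset.prod_mul_distrib, ← Finset.prod_mul_distrib]
    exact Finset.prod_congr rfl fun _ _ => by ring
  linear_combination ((∏ i2 ∈ (Finset.Ioo i m), (N i + 1 - N i2)) *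
    (∏ i1 ∈ Finset.range i, ∏ i2 ∈ (Finset.Ioo i1 m).erase i, (N i1 - N i2)) *
    (∏ i1 ∈ Finset.Ioo i m, ∏ i2 ∈ Finset.Ioo i1 m, (N i1 - N i2)) *
    (∏ i2 ∈ Finset.Ioo i m, (N i - N i2))) * hswap

end BrauerFusion5

namespace BrauerFusion6
open BrauerFusion BrauerFusionAux BrauerFusion2 BrauerFusion3 BrauerFusion4 BrauerFusion5

variable {K : Type*} [Field K] [CharZero K]

lemma zpow_sum₀ {x : K} (hx : x ≠ 0) {α : Type*} (s : Finset α) (f : α → ℤ) :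
    x ^ (∑ a ∈ s, f a) = ∏ a ∈ s, x ^ f a := by
  classical
  induction s using Finset.induction with
  | empty => simp
  | insert _ _ h ih => rw [Finset.sum_insert h, Finset.prod_insert h, zpow_add₀ hx, ih]

lemma prod_zpow_ite (S : Finset ℤ) (x : ℤ → K) (a : ℤ) :
    (∏ k ∈ S, x k ^ (if k = a then (1:ℤ) else 0)) = if a ∈ S then x a else 1 := by
  have h : ∀ k ∈ S, x k ^ (if k = a then (1:ℤ) else 0) = if k = a then x k else 1 := by
    intro k _; split_ifs <;> simp
  rw [Finset.prod_congr rfl h, Finset.prod_ite_eq' S a x]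

theorem step_main (μ ν : YoungDiagram) (i j : ℕ)
    (hn : (i, j) ∉ μ) (hins : ν.cells = insert (i, j) μ.cells) (m : ℕ)
    (hm : μ.card + 2 ≤ m) :
    (hookProd μ : K) *
      ∏ k ∈ (Finset.Icc (-(m:ℤ)) m).erase ((j:ℤ) - i),
        (((j:ℤ) - i - k : ℤ) : K) ^ gD μ k
    = (hookProd ν : K) := by
  set c : ℤ := (j:ℤ) - i with hc_def
  set S : Finset ℤ := (Finset.Icc (-(m:ℤ)) m).erase c with hS_def
  set x : ℤ → K := fun k => ((c - k : ℤ) : K) with hx_def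
  have hrowi := rowLen_mu_i hn hins
  have hrownui := rowLen_nu_i hn hins
  have hrownune := rowLen_nu_ne hn hins
  have hprev := rowLen_mu_prev hn hins
  have hcardnu := card_nu hn hins
  have hic := i_le_card hn hins
  have hjc := j_le_card hn hins
  have him : i < m := by omega
  have hvanμ : ∀ t, m ≤ t → μ.rowLen t = 0 := fun t ht =>
    rowLen_zero_of_card_le μ t (by omega)
  have hvanν : ∀ t, m ≤ t → ν.rowLen t = 0 := fun t ht =>
    rowLen_zero_of_card_le ν t (by omega)
  have hrow_le : ∀ i', μ.rowLen i' ≤ μ.card := fun i' => rowLen_le_card μ i'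
  have hlpi : BrauerFusion4.lp μ i = c := by
    unfold BrauerFusion4.lp; rw [hrowi, hc_def]
  have hlp_ub : ∀ i', BrauerFusion4.lp μ i' ≤ (μ.card : ℤ) := by
    intro i'; have := hrow_le i'; unfold BrauerFusion4.lp; omega
  have hlp_lb : ∀ i' : ℕ, -(i' : ℤ) ≤ BrauerFusion4.lp μ i' := by
    intro i'; unfold BrauerFusion4.lp; omega
  have hlp_prev : ∀ i', i' < i → c + 2 ≤ BrauerFusion4.lp μ i' := by
    intro i' hi'
    have h1 : j + 1 ≤ μ.rowLen i' := hprev i' hi'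
    unfold BrauerFusion4.lp
    rw [hc_def]
    omega
  have hlp_ne_c : ∀ i', i' < m → i' ≠ i → BrauerFusion4.lp μ i' ≠ c := by
    intro i' _ hne
    rcases Nat.lt_or_ge i' i with h | h
    · have := hlp_prev i' h; omega
    · have := lp_strictanti μ (show i < i' by omega); omega
  have hlp_ne_c1 : ∀ i', i' < m → BrauerFusion4.lp μ i' - 1 ≠ c := by
    intro i' _
    rcases Nat.lt_trichotomy i' i with h | h | h
    · have := hlp_prev i' h; omega
    · rw [h, hlpi]; omega
    · have := lp_strictanti μ h; rw [hlpi] at this; omega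
  have hcm : -(m:ℤ) ≠ c := by rw [hc_def]; omega
  have hxne : ∀ k ∈ S, x k ≠ 0 := by
    intro k hk
    rw [hS_def, Finset.mem_erase] at hk
    rw [hx_def]
    simp only [Int.cast_ne_zero]
    omega
  -- step 1 : split the product of zpows
  have hsplit : (∏ k ∈ S, x k ^ gD μ k)
      = (∏ k ∈ S, x k ^ (if k = -(m:ℤ) then (1:ℤ) else 0)) *
        ∏ i' ∈ Finset.range m,
          ((∏ k ∈ S, x k ^ (if k = BrauerFusion4.lp μ i' then (1:ℤ) else 0)) /
           (∏ k ∈ S, x k ^ (if k = BrauerFusion4.lp μ i' - 1 then (1:ℤ) else 0))) := by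
    have h1 : ∀ k ∈ S, x k ^ gD μ k
        = x k ^ (if k = -(m:ℤ) then (1:ℤ) else 0) *
          ∏ i' ∈ Finset.range m,
            (x k ^ (if k = BrauerFusion4.lp μ i' then (1:ℤ) else 0) /
             x k ^ (if k = BrauerFusion4.lp μ i' - 1 then (1:ℤ) else 0)) := by
      intro k hk
      rw [gD_rep μ m hvanμ k, zpow_add₀ (hxne k hk), zpow_sum₀ (hxne k hk)]
      congr 1
      exact Finset.prod_congr rfl fun i' _ => zpow_sub₀ (hxne k hk) _ _
    rw [Finset.prod_congr rfl h1, Finset.prod_mul_distrib, Finset.prod_comm]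
    congr 1
    exact Finset.prod_congr rfl fun i' _ => Finset.prod_div_distrib _ _
  -- step 2 : evaluate the three delta-products
  have e0 : (∏ k ∈ S, x k ^ (if k = -(m:ℤ) then (1:ℤ) else 0)) = ((c + m : ℤ) : K) := by
    have hmem : -(m:ℤ) ∈ S := by
      rw [hS_def, Finset.mem_erase, Finset.mem_Icc]
      exact ⟨hcm, by omega, by omega⟩
    rw [prod_zpow_ite, if_pos hmem]
    simp only [hx_def]
    norm_num
  have e1 : ∀ i' ∈ Finset.range m,
      (∏ k ∈ S, x k ^ (if k = BrauerFusion4.lp μ i' then (1:ℤ) else 0))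
      = if i' = i then 1 else ((c - BrauerFusion4.lp μ i' : ℤ) : K) := by
    intro i' hi'
    rw [Finset.mem_range] at hi'
    rw [prod_zpow_ite]
    by_cases h : i' = i
    · subst h
      rw [hlpi, hS_def, if_neg (Finset.notMem_erase c _), if_pos rfl]
    · have hmem : BrauerFusion4.lp μ i' ∈ S := by
        rw [hS_def, Finset.mem_erase, Finset.mem_Icc]
        have := hlp_ub i'
        have := hlp_lb i'
        exact ⟨hlp_ne_c i' hi' h, by omega, by omega⟩
      rw [if_pos hmem, if_neg h]
  have e2 : ∀ i' ∈ Finset.range m,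
      (∏ k ∈ S, x k ^ (if k = BrauerFusion4.lp μ i' - 1 then (1:ℤ) else 0))
      = ((c - BrauerFusion4.lp μ i' + 1 : ℤ) : K) := by
    intro i' hi'
    rw [Finset.mem_range] at hi'
    have hmem : BrauerFusion4.lp μ i' - 1 ∈ S := by
      rw [hS_def, Finset.mem_erase, Finset.mem_Icc]
      have := hlp_ub i'
      have := hlp_lb i'
      exact ⟨hlp_ne_c1 i' hi', by omega, by omega⟩
    rw [prod_zpow_ite, if_pos hmem]
    show ((c - (BrauerFusion4.lp μ i' - 1) : ℤ) : K) = ((c - BrauerFusion4.lp μ i' + 1 : ℤ) : K)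
    push_cast
    ring
  have hP : (∏ k ∈ S, x k ^ gD μ k)
      = ((c + m : ℤ) : K) * ∏ i' ∈ (Finset.range m).erase i,
          (((c - BrauerFusion4.lp μ i' : ℤ) : K) / ((c - BrauerFusion4.lp μ i' + 1 : ℤ) : K)) := by
    rw [hsplit, e0]
    congr 1
    rw [Finset.prod_congr rfl (fun i' h => by rw [e1 i' h, e2 i' h]),
      ← Finset.prod_erase_mul _ _ (Finset.mem_range.2 him), if_pos rfl, hlpi]
    have hone : ((1:K) / ((c - c + 1 : ℤ) : K)) = 1 := by norm_num
    rw [hone, mul_one]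
    refine Finset.prod_congr rfl fun i' h => ?_
    rw [Finset.mem_erase] at h
    rw [if_neg h.1]
  -- step 3 : convert to Nn form
  have hNZ : ∀ i' ∈ (Finset.range m).erase i,
      ((c - BrauerFusion4.lp μ i' : ℤ) : K)
      = ((Nn μ.rowLen m i : ℕ) : K) - ((Nn μ.rowLen m i' : ℕ) : K) := by
    intro i' h
    rw [Finset.mem_erase, Finset.mem_range] at h
    have hz : c - BrauerFusion4.lp μ i' = ((Nn μ.rowLen m i : ℕ) : ℤ) - ((Nn μ.rowLen m i' : ℕ) : ℤ) := by
      unfold Nn BrauerFusion4.lp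
      rw [hrowi, hc_def]
      omega
    rw [hz]
    push_cast
    ring
  have hNZ1 : ∀ i' ∈ (Finset.range m).erase i,
      ((c - BrauerFusion4.lp μ i' + 1 : ℤ) : K)
      = ((Nn μ.rowLen m i : ℕ) : K) + 1 - ((Nn μ.rowLen m i' : ℕ) : K) := by
    intro i' h
    rw [Finset.mem_erase, Finset.mem_range] at h
    have hz : c - BrauerFusion4.lp μ i' + 1
        = ((Nn μ.rowLen m i : ℕ) : ℤ) + 1 - ((Nn μ.rowLen m i' : ℕ) : ℤ) := by
      unfold Nn BrauerFusion4.lp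
      rw [hrowi, hc_def]
      omega
    rw [hz]
    push_cast
    ring
  have hNZ0 : ((c + m : ℤ) : K) = ((Nn μ.rowLen m i : ℕ) : K) + 1 := by
    have hz : c + m = ((Nn μ.rowLen m i : ℕ) : ℤ) + 1 := by
      unfold Nn
      rw [hrowi, hc_def]
      omega
    rw [hz]
    push_cast
    ring
  have hPfin : (∏ k ∈ S, x k ^ gD μ k)
      = (((Nn μ.rowLen m i : ℕ) : K) + 1) * ∏ i' ∈ (Finset.range m).erase i,
          ((((Nn μ.rowLen m i : ℕ) : K) - ((Nn μ.rowLen m i' : ℕ) : K)) /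
           (((Nn μ.rowLen m i : ℕ) : K) + 1 - ((Nn μ.rowLen m i' : ℕ) : K))) := by
    rw [hP, hNZ0]
    congr 1
    exact Finset.prod_congr rfl fun i' h => by rw [hNZ i' h, hNZ1 i' h]
  -- step 4 : the two global hook identities, cast into K
  have G1 : (hookProd μ : K) *
      ∏ i1 ∈ Finset.range m, ∏ i2 ∈ Finset.Ioo i1 m,
        (((Nn μ.rowLen m i1 : ℕ) : K) - ((Nn μ.rowLen m i2 : ℕ) : K))
      = ∏ i1 ∈ Finset.range m, (((Nn μ.rowLen m i1).factorial : ℕ) : K) := by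
    have := congrArg (fun z : ℤ => (z : K)) (hookProd_global μ m hvanμ)
    push_cast at this
    exact this
  have G2 : (hookProd ν : K) *
      ∏ i1 ∈ Finset.range m, ∏ i2 ∈ Finset.Ioo i1 m,
        (((Nn ν.rowLen m i1 : ℕ) : K) - ((Nn ν.rowLen m i2 : ℕ) : K))
      = ∏ i1 ∈ Finset.range m, (((Nn ν.rowLen m i1).factorial : ℕ) : K) := by
    have := congrArg (fun z : ℤ => (z : K)) (hookProd_global ν m hvanν)
    push_cast at this
    exact this
  -- pair update, cast into K
  have hupd : ∀ i', i' < m → ((Nn ν.rowLen m i' : ℕ) : ℤ)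
      = if i' = i then ((Nn μ.rowLen m i : ℕ) : ℤ) + 1 else ((Nn μ.rowLen m i' : ℕ) : ℤ) := by
    intro i' hi'
    by_cases h : i' = i
    · subst h
      rw [if_pos rfl]
      unfold Nn
      rw [hrownui, hrowi]
      push_cast
      ring
    · rw [if_neg h]
      unfold Nn
      rw [hrownune i' h]
  have PU := pair_update (fun t => ((Nn μ.rowLen m t : ℕ) : ℤ))
    (fun t => ((Nn ν.rowLen m t : ℕ) : ℤ)) m i him hupd
  have PUK : (∏ i1 ∈ Finset.range m, ∏ i2 ∈ Finset.Ioo i1 m,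
        (((Nn ν.rowLen m i1 : ℕ) : K) - ((Nn ν.rowLen m i2 : ℕ) : K))) *
      (∏ i' ∈ (Finset.range m).erase i,
        (((Nn μ.rowLen m i : ℕ) : K) - ((Nn μ.rowLen m i' : ℕ) : K)))
      = (∏ i1 ∈ Finset.range m, ∏ i2 ∈ Finset.Ioo i1 m,
          (((Nn μ.rowLen m i1 : ℕ) : K) - ((Nn μ.rowLen m i2 : ℕ) : K))) *
        (∏ i' ∈ (Finset.range m).erase i,
          (((Nn μ.rowLen m i : ℕ) : K) + 1 - ((Nn μ.rowLen m i' : ℕ) : K))) := by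
    have := congrArg (fun z : ℤ => (z : K)) PU
    push_cast at this
    exact this
  -- factorial ratio
  have hfactK : (∏ i1 ∈ Finset.range m, (((Nn ν.rowLen m i1).factorial : ℕ) : K))
      = (∏ i1 ∈ Finset.range m, (((Nn μ.rowLen m i1).factorial : ℕ) : K)) *
        (((Nn μ.rowLen m i : ℕ) : K) + 1) := by
    rw [← Finset.prod_erase_mul _ _ (Finset.mem_range.2 him),
      ← Finset.prod_erase_mul _ (fun i1 => (((Nn μ.rowLen m i1).factorial : ℕ) : K))
        (Finset.mem_range.2 him)]
    have hers : ∀ i' ∈ (Finset.range m).erase i,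
        (((Nn ν.rowLen m i').factorial : ℕ) : K) = (((Nn μ.rowLen m i').factorial : ℕ) : K) := by
      intro i' h
      rw [Finset.mem_erase] at h
      unfold Nn
      rw [hrownune i' h.1]
    rw [Finset.prod_congr rfl hers]
    have hsucc : Nn ν.rowLen m i = Nn μ.rowLen m i + 1 := by
      unfold Nn
      rw [hrownui, hrowi]
      omega
    rw [hsucc, Nat.factorial_succ]
    push_cast
    ring
  -- nonvanishing
  have hmono : ∀ i1 i2, i1 < i2 → i2 < m → Nn μ.rowLen m i2 < Nn μ.rowLen m i1 := by
    intro i1 i2 h12 h2m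
    have := μ.rowLen_anti i1 i2 (le_of_lt h12)
    unfold Nn
    omega
  have hmonoν : ∀ i1 i2, i1 < i2 → i2 < m → Nn ν.rowLen m i2 < Nn ν.rowLen m i1 := by
    intro i1 i2 h12 h2m
    have := ν.rowLen_anti i1 i2 (le_of_lt h12)
    unfold Nn
    omega
  have hAνne : (∏ i1 ∈ Finset.range m, ∏ i2 ∈ Finset.Ioo i1 m,
      (((Nn ν.rowLen m i1 : ℕ) : K) - ((Nn ν.rowLen m i2 : ℕ) : K))) ≠ 0 := by
    rw [Finset.prod_ne_zero_iff]
    intro i1 h1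
    rw [Finset.prod_ne_zero_iff]
    intro i2 h2
    rw [Finset.mem_Ioo] at h2
    have := hmonoν i1 i2 h2.1 h2.2
    intro hcon
    rw [sub_eq_zero, Nat.cast_inj] at hcon
    omega
  have hΔ'ne : ∀ i' ∈ (Finset.range m).erase i,
      (((Nn μ.rowLen m i : ℕ) : K) + 1 - ((Nn μ.rowLen m i' : ℕ) : K)) ≠ 0 := by
    intro i' h
    rw [Finset.mem_erase, Finset.mem_range] at h
    have hz : ((Nn μ.rowLen m i : ℕ) : K) + 1 - ((Nn μ.rowLen m i' : ℕ) : K)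
        = (((Nn μ.rowLen m i : ℕ) + 1 - (Nn μ.rowLen m i' : ℕ) : ℤ) : K) := by
      push_cast
      ring
    rw [hz, Int.cast_ne_zero]
    rcases Nat.lt_or_ge i' i with hlt | hge
    · -- i' < i : Nn i' ≥ Nn i + 2
      have h1 : j + 1 ≤ μ.rowLen i' := hprev i' hlt
      unfold Nn
      rw [hrowi]
      omega
    · have := hmono i (i') (by omega) h.2
      omega
  have hprodΔ'ne : (∏ i' ∈ (Finset.range m).erase i,
      (((Nn μ.rowLen m i : ℕ) : K) + 1 - ((Nn μ.rowLen m i' : ℕ) : K))) ≠ 0 :=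
    Finset.prod_ne_zero_iff.2 hΔ'ne
  -- final assembly
  rw [hPfin]
  apply mul_right_cancel₀ (mul_ne_zero hAνne hprodΔ'ne)
  have hdivmul : (∏ i' ∈ (Finset.range m).erase i,
        ((((Nn μ.rowLen m i : ℕ) : K) - ((Nn μ.rowLen m i' : ℕ) : K)) /
         (((Nn μ.rowLen m i : ℕ) : K) + 1 - ((Nn μ.rowLen m i' : ℕ) : K)))) *
      (∏ i' ∈ (Finset.range m).erase i,
        (((Nn μ.rowLen m i : ℕ) : K) + 1 - ((Nn μ.rowLen m i' : ℕ) : K)))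
      = ∏ i' ∈ (Finset.range m).erase i,
          (((Nn μ.rowLen m i : ℕ) : K) - ((Nn μ.rowLen m i' : ℕ) : K)) := by
    rw [Finset.prod_div_distrib, div_mul_cancel₀ _ hprodΔ'ne]
  calc (hookProd μ : K) *
        ((((Nn μ.rowLen m i : ℕ) : K) + 1) * ∏ i' ∈ (Finset.range m).erase i,
          ((((Nn μ.rowLen m i : ℕ) : K) - ((Nn μ.rowLen m i' : ℕ) : K)) /
           (((Nn μ.rowLen m i : ℕ) : K) + 1 - ((Nn μ.rowLen m i' : ℕ) : K)))) *
        ((∏ i1 ∈ Finset.range m, ∏ i2 ∈ Finset.Ioo i1 m,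
          (((Nn ν.rowLen m i1 : ℕ) : K) - ((Nn ν.rowLen m i2 : ℕ) : K))) *
         (∏ i' ∈ (Finset.range m).erase i,
          (((Nn μ.rowLen m i : ℕ) : K) + 1 - ((Nn μ.rowLen m i' : ℕ) : K))))
      = (hookProd μ : K) * (((Nn μ.rowLen m i : ℕ) : K) + 1) *
        ((∏ i1 ∈ Finset.range m, ∏ i2 ∈ Finset.Ioo i1 m,
          (((Nn ν.rowLen m i1 : ℕ) : K) - ((Nn ν.rowLen m i2 : ℕ) : K))) *
         ((∏ i' ∈ (Finset.range m).erase i,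
          ((((Nn μ.rowLen m i : ℕ) : K) - ((Nn μ.rowLen m i' : ℕ) : K)) /
           (((Nn μ.rowLen m i : ℕ) : K) + 1 - ((Nn μ.rowLen m i' : ℕ) : K)))) *
          (∏ i' ∈ (Finset.range m).erase i,
          (((Nn μ.rowLen m i : ℕ) : K) + 1 - ((Nn μ.rowLen m i' : ℕ) : K))))) := by ring
    _ = (hookProd μ : K) * (((Nn μ.rowLen m i : ℕ) : K) + 1) *
        ((∏ i1 ∈ Finset.range m, ∏ i2 ∈ Finset.Ioo i1 m,
          (((Nn ν.rowLen m i1 : ℕ) : K) - ((Nn ν.rowLen m i2 : ℕ) : K))) *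
         (∏ i' ∈ (Finset.range m).erase i,
          (((Nn μ.rowLen m i : ℕ) : K) - ((Nn μ.rowLen m i' : ℕ) : K)))) := by rw [hdivmul]
    _ = (hookProd μ : K) * (((Nn μ.rowLen m i : ℕ) : K) + 1) *
        ((∏ i1 ∈ Finset.range m, ∏ i2 ∈ Finset.Ioo i1 m,
          (((Nn μ.rowLen m i1 : ℕ) : K) - ((Nn μ.rowLen m i2 : ℕ) : K))) *
         (∏ i' ∈ (Finset.range m).erase i,
          (((Nn μ.rowLen m i : ℕ) : K) + 1 - ((Nn μ.rowLen m i' : ℕ) : K)))) := by rw [PUK]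
    _ = ((hookProd μ : K) * (∏ i1 ∈ Finset.range m, ∏ i2 ∈ Finset.Ioo i1 m,
          (((Nn μ.rowLen m i1 : ℕ) : K) - ((Nn μ.rowLen m i2 : ℕ) : K)))) *
        ((((Nn μ.rowLen m i : ℕ) : K) + 1) *
         (∏ i' ∈ (Finset.range m).erase i,
          (((Nn μ.rowLen m i : ℕ) : K) + 1 - ((Nn μ.rowLen m i' : ℕ) : K)))) := by ring
    _ = (∏ i1 ∈ Finset.range m, (((Nn μ.rowLen m i1).factorial : ℕ) : K)) *
        ((((Nn μ.rowLen m i : ℕ) : K) + 1) *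
         (∏ i' ∈ (Finset.range m).erase i,
          (((Nn μ.rowLen m i : ℕ) : K) + 1 - ((Nn μ.rowLen m i' : ℕ) : K)))) := by rw [G1]
    _ = (∏ i1 ∈ Finset.range m, (((Nn ν.rowLen m i1).factorial : ℕ) : K)) *
        (∏ i' ∈ (Finset.range m).erase i,
          (((Nn μ.rowLen m i : ℕ) : K) + 1 - ((Nn μ.rowLen m i' : ℕ) : K))) := by
        rw [hfactK]; ring
    _ = ((hookProd ν : K) *
        (∏ i1 ∈ Finset.range m, ∏ i2 ∈ Finset.Ioo i1 m,
          (((Nn ν.rowLen m i1 : ℕ) : K) - ((Nn ν.rowLen m i2 : ℕ) : K)))) *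
        (∏ i' ∈ (Finset.range m).erase i,
          (((Nn μ.rowLen m i : ℕ) : K) + 1 - ((Nn μ.rowLen m i' : ℕ) : K))) := by rw [G2]
    _ = (hookProd ν : K) *
        ((∏ i1 ∈ Finset.range m, ∏ i2 ∈ Finset.Ioo i1 m,
          (((Nn ν.rowLen m i1 : ℕ) : K) - ((Nn ν.rowLen m i2 : ℕ) : K))) *
         (∏ i' ∈ (Finset.range m).erase i,
          (((Nn μ.rowLen m i : ℕ) : K) + 1 - ((Nn μ.rowLen m i' : ℕ) : K)))) := by ring

end BrauerFusion6


namespace BrauerFusion7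
open BrauerFusion BrauerFusionAux BrauerFusion2 BrauerFusion3 BrauerFusion4 BrauerFusion5 BrauerFusion6

lemma gD_diag (μ ν : YoungDiagram) (b : ℕ × ℕ) (hn : b ∉ μ)
    (hins : ν.cells = insert b μ.cells) :
    gD μ ((b.2 : ℤ) - b.1) = 1 := by
  obtain ⟨i, j⟩ := b
  simp only
  set m : ℕ := μ.card + 2 with hm_def
  have hrowi := rowLen_mu_i hn hins
  have hprev := rowLen_mu_prev hn hins
  have hic := i_le_card hn hins
  have him : i < m := by omega
  have hvanμ : ∀ t, m ≤ t → μ.rowLen t = 0 := fun t ht =>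
    rowLen_zero_of_card_le μ t (by omega)
  have hlpi : BrauerFusion4.lp μ i = (j : ℤ) - i := by
    unfold BrauerFusion4.lp; rw [hrowi]
  have hlp_prev : ∀ i', i' < i → (j : ℤ) - i + 2 ≤ BrauerFusion4.lp μ i' := by
    intro i' hi'
    have h1 : j + 1 ≤ μ.rowLen i' := hprev i' hi'
    unfold BrauerFusion4.lp
    omega
  have hlp_ne_c : ∀ i', i' ≠ i → BrauerFusion4.lp μ i' ≠ (j : ℤ) - i := by
    intro i' hne
    rcases Nat.lt_or_ge i' i with h | h
    · have := hlp_prev i' h; omega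
    · have := lp_strictanti μ (show i < i' by omega); omega
  have hlp_ne_c1 : ∀ i' : ℕ, BrauerFusion4.lp μ i' - 1 ≠ (j : ℤ) - i := by
    intro i'
    rcases Nat.lt_trichotomy i' i with h | h | h
    · have := hlp_prev i' h; omega
    · rw [h, hlpi]; omega
    · have := lp_strictanti μ h; rw [hlpi] at this; omega
  rw [gD_rep μ m hvanμ ((j : ℤ) - i)]
  rw [if_neg (show (j : ℤ) - i ≠ -(m : ℤ) by omega)]
  rw [Finset.sum_eq_single i]
  · rw [if_pos hlpi.symm, if_neg (fun h => hlp_ne_c1 i h.symm)]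
    norm_num
  · intro i' _ hne
    rw [if_neg (fun h => hlp_ne_c i' hne h.symm), if_neg (fun h => hlp_ne_c1 i' h.symm)]
    norm_num
  · intro habs
    exact absurd (Finset.mem_range.2 him) habs

theorem step_main_box (μ ν : YoungDiagram) (b : ℕ × ℕ) (hn : b ∉ μ)
    (hins : ν.cells = insert b μ.cells) (m : ℕ) (hm : μ.card + 2 ≤ m) :
    (BrauerFusion.hookProd μ : BrauerFusion.F) *
      ∏ k ∈ (Finset.Icc (-(m:ℤ)) m).erase ((b.2 : ℤ) - b.1),
        (((b.2 : ℤ) - b.1 - k : ℤ) : BrauerFusion.F) ^ gD μ k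
    = (BrauerFusion.hookProd ν : BrauerFusion.F) := by
  have : CharZero BrauerFusion.F :=
    charZero_of_injective_algebraMap (algebraMap ℂ (RatFunc ℂ)).injective
  obtain ⟨i, j⟩ := b
  exact step_main μ ν i j hn hins m hm

end BrauerFusion7


namespace BrauerFusion

/-- **Proposition 3.1.** If `T = (Λ_1,…,Λ_n)` is an updown `λ`-tableau and `λ` is a
partition of `n`, then all exponents `p_1,…,p_n` of `T` are equal to zero, and `f(T)`
equals the product of the hook lengths of all boxes of `λ`. -/
theorem exponents_eq_zero_and_fT_eq_hookProd
    (n : ℕ) (T : UpDownTableau n) (hshape : (T.shape n).card = n) :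
    (∀ r, 1 ≤ r → r ≤ n → pExp T r = 0) ∧
    fT T n = (hookProd (T.shape n) : F) := by
  classical
  -- Step changes of cardinality
  have hstep : ∀ r, 1 ≤ r → r ≤ n →
      ((T.shape r).card = (T.shape (r-1)).card + 1 ∧ T.add r = true) ∨
      ((T.shape (r-1)).card = (T.shape r).card + 1 ∧ T.add r = false) := by
    intro r h1 h2
    cases hadd : T.add r with
    | false =>
      right
      obtain ⟨hb, hc⟩ := T.step_rem r h1 h2 hadd
      refine ⟨?_, rfl⟩
      show (T.shape (r-1)).cells.card = (T.shape r).cells.card + 1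
      rw [hc, Finset.card_insert_of_notMem (by rwa [YoungDiagram.mem_cells])]
    | true =>
      left
      obtain ⟨hb, hc⟩ := T.step_add r h1 h2 hadd
      refine ⟨?_, rfl⟩
      show (T.shape r).cells.card = (T.shape (r-1)).cells.card + 1
      rw [hc, Finset.card_insert_of_notMem (by rwa [YoungDiagram.mem_cells])]
  have hcard0 : (T.shape 0).card = 0 := by
    show (T.shape 0).cells.card = 0
    rw [T.shape_zero, YoungDiagram.cells_bot, Finset.card_empty]
  have hub : ∀ r, r ≤ n → (T.shape r).card ≤ r := by
    intro r
    induction r with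
    | zero => intro _; omega
    | succ r ih =>
      intro h
      have hr := ih (by omega)
      rcases hstep (r+1) (by omega) h with ⟨h1, _⟩ | ⟨h1, _⟩ <;>
        simp only [Nat.add_sub_cancel] at h1 <;> omega
  have hlb : ∀ d r, r + d = n → n ≤ (T.shape r).card + d := by
    intro d
    induction d with
    | zero =>
      intro r h
      have : r = n := by omega
      subst this
      omega
    | succ d ih =>
      intro r h
      have h2 := ih (r+1) (by omega)
      rcases hstep (r+1) (by omega) (by omega) with ⟨h1, _⟩ | ⟨h1, _⟩ <;>
        simp only [Nat.add_sub_cancel] at h1 <;> omega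
  have hcard : ∀ r, r ≤ n → (T.shape r).card = r := by
    intro r h
    have h1 := hub r h
    have h2 := hlb (n - r) r (by omega)
    omega
  have hadd : ∀ r, 1 ≤ r → r ≤ n → T.add r = true := by
    intro r h1 h2
    rcases hstep r h1 h2 with h | h
    · exact h.2
    · exfalso
      have e1 := hcard r h2
      have e2 := hcard (r-1) (by omega)
      omega
  have hins : ∀ r, 1 ≤ r → r ≤ n →
      T.box r ∉ T.shape (r-1) ∧ (T.shape r).cells = insert (T.box r) (T.shape (r-1)).cells :=
    fun r h1 h2 => T.step_add r h1 h2 (hadd r h1 h2)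
  -- dAdd equals the diagonal count of the current shape
  have hdAdd : ∀ r, r ≤ n → ∀ k, dAdd T r k = BrauerFusion4.DiaZ (T.shape r) k := by
    intro r
    induction r with
    | zero =>
      intro _ k
      unfold dAdd BrauerFusion4.DiaZ
      rw [T.shape_zero, YoungDiagram.cells_bot, Finset.Icc_eq_empty (by omega)]
      simp
    | succ r ih =>
      intro h k
      have hins' := hins (r+1) (by omega) h
      simp only [Nat.add_sub_cancel] at hins'
      have hIcc : Finset.Icc 1 (r+1) = insert (r+1) (Finset.Icc 1 r) := by
        ext a
        simp only [Finset.mem_insert, Finset.mem_Icc]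
        omega
      unfold dAdd BrauerFusion4.DiaZ
      rw [hIcc, Finset.filter_insert, hins'.2, Finset.filter_insert]
      have hnot1 : (r+1) ∉ (Finset.Icc 1 r).filter
          (fun t => T.add t = true ∧ ((T.box t).2 : ℤ) - ((T.box t).1 : ℤ) = k) := by
        intro hmem
        have := (Finset.mem_filter.1 hmem).1
        rw [Finset.mem_Icc] at this
        omega
      have hnot2 : T.box (r+1) ∉ (T.shape r).cells.filter
          (fun b => (b.2 : ℤ) - b.1 = k) := by
        intro hmem
        have := (Finset.mem_filter.1 hmem).1
        rw [YoungDiagram.mem_cells] at this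
        exact hins'.1 this
      by_cases hdg : ((T.box (r+1)).2 : ℤ) - ((T.box (r+1)).1 : ℤ) = k
      · rw [if_pos ⟨hadd (r+1) (by omega) h, hdg⟩, if_pos hdg,
          Finset.card_insert_of_notMem hnot1, Finset.card_insert_of_notMem hnot2]
        have := ih (by omega) k
        unfold dAdd BrauerFusion4.DiaZ at this
        push_cast
        omega
      · rw [if_neg (fun hcon => hdg hcon.2), if_neg hdg]
        have := ih (by omega) k
        unfold dAdd BrauerFusion4.DiaZ at this
        exact this
  have hdRem : ∀ r, r ≤ n → ∀ k, dRem T r k = 0 := by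
    intro r h k
    unfold dRem
    have : (Finset.Icc 1 r).filter
        (fun t => T.add t = false ∧ ((T.box t).2 : ℤ) - ((T.box t).1 : ℤ) = k) = ∅ := by
      rw [Finset.filter_eq_empty_iff]
      intro t ht
      rw [Finset.mem_Icc] at ht
      rw [hadd t (by omega) (by omega)]
      simp
    rw [this]
    simp
  have hgAdd : ∀ r, r ≤ n → ∀ k, gAdd T r k = BrauerFusion4.gD (T.shape r) k := by
    intro r h k
    unfold gAdd BrauerFusion4.gD
    rw [hdAdd r h (k-1), hdAdd r h (k+1), hdAdd r h k]
  have hgRem : ∀ r, r ≤ n → ∀ k, gRem T r k = 0 := by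
    intro r h k
    unfold gRem
    rw [hdRem r h (k-1), hdRem r h (k+1), hdRem r h k]
    ring
  constructor
  · -- the exponents vanish
    intro r h1 h2
    unfold pExp
    rw [hadd r h1 h2]
    simp only [if_true]
    rw [hgAdd (r-1) (by omega) (diagOf T r)]
    unfold diagOf
    rw [BrauerFusion7.gD_diag (T.shape (r-1)) (T.shape r) (T.box r)
      (hins r h1 h2).1 (hins r h1 h2).2]
    ring
  · -- the value of f(T)
    have hfT : ∀ r, r ≤ n → fT T r = (hookProd (T.shape r) : F) := by
      intro r
      induction r with
      | zero =>
        intro _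
        show (1 : F) = (hookProd (T.shape 0) : F)
        rw [T.shape_zero]
        unfold hookProd
        rw [YoungDiagram.cells_bot]
        simp
      | succ r ih =>
        intro h
        have hins' := hins (r+1) (by omega) h
        simp only [Nat.add_sub_cancel] at hins'
        show fT T r * phiStep T (r+1) = (hookProd (T.shape (r+1)) : F)
        rw [ih (by omega)]
        unfold phiStep
        rw [hadd (r+1) (by omega) h]
        simp only [if_true]
        have hg0 : ∀ k ∈ Finset.Icc (-((r+1 : ℕ) : ℤ) - 1) (((r+1 : ℕ) : ℤ) + 1),
            (((diagOf T (r+1) + k : ℤ) : F) + ωF - 1) ^ gRem T ((r+1)-1) k = 1 := by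
          intro k _
          rw [Nat.add_sub_cancel, hgRem r (by omega) k, zpow_zero]
        rw [Finset.prod_congr rfl hg0, Finset.prod_const_one, mul_one]
        have hexp : ∀ k ∈ (Finset.Icc (-((r+1 : ℕ) : ℤ) - 1) (((r+1 : ℕ) : ℤ) + 1)).erase
            (diagOf T (r+1)),
            ((diagOf T (r+1) - k : ℤ) : F) ^ gAdd T ((r+1)-1) k
            = ((diagOf T (r+1) - k : ℤ) : F) ^ BrauerFusion4.gD (T.shape r) k := by
          intro k _
          rw [Nat.add_sub_cancel, hgAdd r (by omega) k]
        rw [Finset.prod_congr rfl hexp]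
        have hIcc : Finset.Icc (-((r+1 : ℕ) : ℤ) - 1) (((r+1 : ℕ) : ℤ) + 1)
            = Finset.Icc (-((r+2 : ℕ) : ℤ)) ((r+2 : ℕ) : ℤ) := by
          congr 1 <;> push_cast <;> ring
        rw [hIcc]
        have hcr : (T.shape r).card = r := hcard r (by omega)
        have := BrauerFusion7.step_main_box (T.shape r) (T.shape (r+1)) (T.box (r+1))
          hins'.1 hins'.2 (r+2) (by omega)
        unfold diagOf
        exact this
    exact hfT n (le_refl n)


end BrauerFusion
end
end

section
/- Let u and v be independent indeterminates. For any indices 1 ≤ i < j < r ≤ n, the following identity holds in B_n(ω) ⊗_F F(u,v): (1 − e_{ir}/u)(1 − e_{jr}/v)(1 − s_{ij}/(u−v)) = (1 − s_{ij}/(u−v))(1 − e_{jr}/v)(1 − e_{ir}/u). -/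
/-!
Common definitions for the fusion procedure for the Brauer algebra
(Isaev–Molev, "Fusion procedure for the Brauer algebra").
-/

noncomputable section
open scoped BigOperators
open Classical

namespace BrauerFusion

section Aux

variable {R : Type*} {A : Type*} [CommRing R] [Ring A] [Algebra R A]
variable {n : ℕ} {ω : R} {s e : ℕ → A}

theorem comm_assoc' {x y z : A} (h : x * y = y * x) : x * (y * z) = y * (x * z) := by
  rw [← mul_assoc, h, mul_assoc]

theorem cancel_left' {x : A} (h : x * x = 1) (y : A) : x * (x * y) = y := by
  rw [← mul_assoc, h, one_mul]

theorem shift3 {a b c d : A} (h : a * b * c = d) (x : A) :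
    a * (b * (c * x)) = d * x := by
  rw [← mul_assoc, ← mul_assoc, h]

theorem sij_of_lt {i j : ℕ} (h : i + 1 < j) :
    sij s i j = s i * sij s (i+1) j * s i := by
  rw [sij]; rw [dif_pos h]

theorem sij_base {i j : ℕ} (h : ¬ i + 1 < j) : sij s i j = s i := by
  rw [sij]; rw [dif_neg h]

theorem eij_of_lt {i j : ℕ} (h : i + 1 < j) :
    eij s e i j = sij s i (j-1) * e (j-1) * sij s i (j-1) := by
  rw [eij, if_pos h]

theorem eij_of_not {i j : ℕ} (h : ¬ i + 1 < j) : eij s e i j = e i := by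
  rw [eij, if_neg h]

/-- A generator `s k` with `k + 1 < a` commutes with `s_{ab}`. -/
theorem comS (hB : IsBrauer n ω s e) (k a b : ℕ) (hk : 1 ≤ k) (hka : k + 1 < a)
    (hab : a < b) (hbn : b ≤ n) : s k * sij s a b = sij s a b * s k := by
  by_cases h : a + 1 < b
  · rw [sij_of_lt h]
    have h1 : s k * s a = s a * s k := hB.ss_comm k a hk (by omega) hka
    have h2 : s k * sij s (a+1) b = sij s (a+1) b * s k :=
      comS hB k (a+1) b hk (by omega) h hbn
    simp only [mul_assoc]
    rw [comm_assoc' h1, comm_assoc' h2, h1]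
  · have hb : b = a + 1 := by omega
    subst hb
    rw [sij_base (by omega)]
    exact hB.ss_comm k a hk (by omega) hka
termination_by b - a
decreasing_by omega

/-- A generator `e m` with `b < m` commutes with `s_{ab}`. -/
theorem comE (hB : IsBrauer n ω s e) (m a b : ℕ) (ha : 1 ≤ a) (hab : a < b)
    (hbm : b < m) (hmn : m + 1 ≤ n) : e m * sij s a b = sij s a b * e m := by
  by_cases h : a + 1 < b
  · rw [sij_of_lt h]
    have h1 : e m * s a = s a * e m := (hB.se_comm a m ha hmn (by omega)).symm
    have h2 : e m * sij s (a+1) b = sij s (a+1) b * e m :=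
      comE hB m (a+1) b (by omega) h hbm hmn
    simp only [mul_assoc]
    rw [comm_assoc' h1, comm_assoc' h2, h1]
  · have hb : b = a + 1 := by omega
    subst hb
    rw [sij_base (by omega)]
    exact (hB.se_comm a m ha hmn (by omega)).symm
termination_by b - a
decreasing_by omega

/-- `s_{ij}² = 1`. -/
theorem sij_sq (hB : IsBrauer n ω s e) (i j : ℕ) (hi : 1 ≤ i) (hij : i < j) (hjn : j ≤ n) :
    sij s i j * sij s i j = 1 := by
  have hss : s i * s i = 1 := hB.ss i hi (by omega)
  by_cases h : i + 1 < j
  · rw [sij_of_lt h]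
    have ih := sij_sq hB (i+1) j (by omega) h hjn
    simp only [mul_assoc]
    rw [cancel_left' hss, cancel_left' ih]
    exact hss
  · have hb : j = i + 1 := by omega
    subst hb; rw [sij_base (by omega)]; exact hss
termination_by j - i
decreasing_by omega

/-- The alternative recursion `s_{ij} = s_{j-1} s_{i,j-1} s_{j-1}`. -/
theorem sij_alt (hB : IsBrauer n ω s e) (i j : ℕ) (hi : 1 ≤ i) (hij : i + 1 < j)
    (hjn : j ≤ n) : sij s i j = s (j-1) * sij s i (j-1) * s (j-1) := by
  by_cases h : i + 2 < j
  · have h1 : i + 1 < j - 1 := by omega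
    rw [sij_of_lt hij, sij_alt hB (i+1) j (by omega) (by omega) hjn, sij_of_lt h1]
    have hc : s i * s (j-1) = s (j-1) * s i := hB.ss_comm i (j-1) hi (by omega) (by omega)
    simp only [mul_assoc]
    rw [comm_assoc' hc, ← hc]
  · have hb : j = i + 2 := by omega
    subst hb
    rw [show i + 2 - 1 = i + 1 from by omega, sij_of_lt hij,
      sij_base (show ¬ (i+1) + 1 < i + 2 by omega), sij_base (show ¬ i + 1 < i + 1 by omega)]
    exact hB.braid i hi (by omega)
termination_by j - i
decreasing_by omega

/-- The generalized braid relation `s_i s_{i+1,m} s_i = s_{i+1,m} s_i s_{i+1,m}`. -/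
theorem braid_gen (hB : IsBrauer n ω s e) (i m : ℕ) (hi : 1 ≤ i) (him : i + 1 < m)
    (hmn : m ≤ n) :
    s i * sij s (i+1) m * s i = sij s (i+1) m * s i * sij s (i+1) m := by
  by_cases h : i + 2 < m
  · have hc : s i * s (m-1) = s (m-1) * s i := hB.ss_comm i (m-1) hi (by omega) (by omega)
    have hssm : s (m-1) * s (m-1) = 1 := hB.ss (m-1) (by omega) (by omega)
    have ih := braid_gen hB i (m-1) hi (by omega) (by omega)
    have ih' := shift3 ih
    rw [sij_alt hB (i+1) m (by omega) (by omega) hmn]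
    simp only [mul_assoc]
    rw [comm_assoc' hc, ← hc, ih', ← comm_assoc' hc, cancel_left' hssm]
    simp only [mul_assoc]
  · have hb : m = i + 2 := by omega
    subst hb
    rw [sij_base (show ¬ (i+1) + 1 < i + 2 by omega)]
    exact hB.braid i hi (by omega)
termination_by m - i
decreasing_by omega

/-- Conjugation: `s_{ij} s_{im} s_{ij} = s_{jm}`. -/
theorem conjS (hB : IsBrauer n ω s e) (i j m : ℕ) (hi : 1 ≤ i) (hij : i < j) (hjm : j < m)
    (hmn : m ≤ n) : sij s i j * sij s i m * sij s i j = sij s j m := by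
  have hss : s i * s i = 1 := hB.ss i hi (by omega)
  by_cases h : i + 1 < j
  · have ih := conjS hB (i+1) j m (by omega) h hjm hmn
    have ih' := shift3 ih
    have hcom : s i * sij s j m = sij s j m * s i := comS hB i j m hi h hjm hmn
    rw [sij_of_lt h, sij_of_lt (show i + 1 < m by omega)]
    simp only [mul_assoc]
    rw [cancel_left' hss, cancel_left' hss, ih', comm_assoc' hcom, hss, mul_one]
  · have hb : j = i + 1 := by omega
    subst hb
    rw [sij_base (show ¬ i + 1 < i + 1 by omega), sij_of_lt (show i + 1 < m by omega)]
    simp only [mul_assoc]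
    rw [cancel_left' hss, hss, mul_one]
termination_by j - i
decreasing_by omega

/-- Conjugation: `s_{jm} s_{ij} s_{jm} = s_{im}`. -/
theorem conjS' (hB : IsBrauer n ω s e) (i j m : ℕ) (hi : 1 ≤ i) (hij : i < j) (hjm : j < m)
    (hmn : m ≤ n) : sij s j m * sij s i j * sij s j m = sij s i m := by
  by_cases h : i + 1 < j
  · have ih := conjS' hB (i+1) j m (by omega) h hjm hmn
    have ih' := shift3 ih
    have hcom : s i * sij s j m = sij s j m * s i := comS hB i j m hi h hjm hmn
    rw [sij_of_lt h, sij_of_lt (show i + 1 < m by omega)]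
    simp only [mul_assoc]
    rw [← comm_assoc' hcom, hcom, ih']
  · have hb : j = i + 1 := by omega
    subst hb
    rw [sij_base (show ¬ i + 1 < i + 1 by omega), sij_of_lt (show i + 1 < m by omega)]
    exact (braid_gen hB i m hi (by omega) hmn).symm
termination_by j - i
decreasing_by omega

/-- `e_m s_{im} e_m = e_m`. -/
theorem e_s_e (hB : IsBrauer n ω s e) (i m : ℕ) (hi : 1 ≤ i) (him : i < m)
    (hmn : m + 1 ≤ n) : e m * sij s i m * e m = e m := by
  by_cases h : i + 1 < m
  · have hcom : e m * s i = s i * e m := (hB.se_comm i m hi hmn h).symm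
    have hss : s i * s i = 1 := hB.ss i hi (by omega)
    have ih := e_s_e hB (i+1) m (by omega) h hmn
    have ih' := shift3 ih
    rw [sij_of_lt h]
    simp only [mul_assoc]
    rw [comm_assoc' hcom, ← hcom, ih', hcom, cancel_left' hss]
  · have hb : m = i + 1 := by omega
    subst hb
    rw [sij_base (show ¬ i + 1 < i + 1 by omega)]
    have h1 : e (i+1) * e i * s (i+1) = e (i+1) * s i := hB.ees i hi (by omega)
    rw [← h1, mul_assoc, hB.se (i+1) (by omega) (by omega)]
    exact hB.eee₂ i hi (by omega)
termination_by m - i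
decreasing_by omega

/-- `e_{jr} s_{ij} e_{jr} = e_{jr}`. -/
theorem eSe (hB : IsBrauer n ω s e) (i j r : ℕ) (hi : 1 ≤ i) (hij : i < j) (hjr : j < r)
    (hrn : r ≤ n) : eij s e j r * sij s i j * eij s e j r = eij s e j r := by
  by_cases h : j + 1 < r
  · rw [eij_of_lt h]
    have hG2 : sij s j (r-1) * sij s i j * sij s j (r-1) = sij s i (r-1) :=
      conjS' hB i j (r-1) hi hij (by omega) (by omega)
    have hbase : e (r-1) * sij s i (r-1) * e (r-1) = e (r-1) :=
      e_s_e hB i (r-1) hi (by omega) (by omega)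
    have hG2' := shift3 hG2
    have hbase' := shift3 hbase
    simp only [mul_assoc]
    rw [hG2', hbase']
  · have hjr1 : r = j + 1 := by omega
    subst hjr1
    rw [eij_of_not (by omega)]
    exact e_s_e hB i j hi hij (by omega)

/-- Conjugation: `s_{ij} e_{ir} s_{ij} = e_{jr}`. -/
theorem conj_eij (hB : IsBrauer n ω s e) (i j r : ℕ) (hi : 1 ≤ i) (hij : i < j) (hjr : j < r)
    (hrn : r ≤ n) : sij s i j * eij s e i r * sij s i j = eij s e j r := by
  have hS2 : sij s i j * sij s i j = 1 := sij_sq hB i j hi hij (by omega)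
  rw [eij_of_lt (show i + 1 < r by omega)]
  by_cases h : j + 1 < r
  · rw [eij_of_lt h]
    have hcom : sij s i j * e (r-1) = e (r-1) * sij s i j :=
      (comE hB (r-1) i j hi hij (by omega) (by omega)).symm
    have hG : sij s i j * sij s i (r-1) * sij s i j = sij s j (r-1) :=
      conjS hB i j (r-1) hi hij (by omega) (by omega)
    rw [← hG]
    simp only [mul_assoc]
    rw [comm_assoc' hcom, cancel_left' hS2]
  · have hjr1 : r = j + 1 := by omega
    subst hjr1
    rw [eij_of_not (by omega), show j + 1 - 1 = j from by omega]
    simp only [mul_assoc]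
    rw [cancel_left' hS2, hS2, mul_one]

end Aux

/-- **The identity (3.8).** For `1 ≤ i < j < r ≤ n`,
`(1 - e_{ir}/u)(1 - e_{jr}/v)(1 - s_{ij}/(u-v)) = (1 - s_{ij}/(u-v))(1 - e_{jr}/v)(1 - e_{ir}/u)`
in `B_n(ω) ⊗ F(u,v)`.  This is stated in any algebra over a field `K ⊇ ℂ(ω)` and for any
`u, v ∈ K` at which the denominators are nonzero (in particular for independent
indeterminates `u, v`). -/
theorem eir_ejr_sij_identity
    {K : Type*} [Field K] [Algebra F K] {A : Type*} [Ring A] [Algebra K A]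
    (n i j r : ℕ) (hi : 1 ≤ i) (hij : i < j) (hjr : j < r) (hrn : r ≤ n)
    (s e : ℕ → A) (hB : IsBrauer n (algebraMap F K ωF) s e)
    (u v : K) (hu : u ≠ 0) (hv : v ≠ 0) (huv : u ≠ v) :
    (1 - u⁻¹ • eij s e i r) * (1 - v⁻¹ • eij s e j r) * (1 - (u - v)⁻¹ • sij s i j)
    = (1 - (u - v)⁻¹ • sij s i j) * (1 - v⁻¹ • eij s e j r) * (1 - u⁻¹ • eij s e i r) := by
  have hsub : u - v ≠ 0 := sub_ne_zero.mpr huv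
  have hsub2 : -v + u ≠ 0 := by rw [neg_add_eq_sub]; exact hsub
  set S := sij s i j with hSdef
  set E := eij s e i r with hEdef
  set Eb := eij s e j r with hEbdef
  have hS2 : S * S = 1 := sij_sq hB i j hi hij (by omega)
  have hSES : S * E * S = Eb := conj_eij hB i j r hi hij hjr hrn
  have hEbSEb : Eb * S * Eb = Eb := eSe hB i j r hi hij hjr hrn
  have hS5 : ∀ x : A, S * (S * x) = x := cancel_left' hS2
  have r1 : Eb * S = S * E := by
    rw [← hSES]
    simp only [mul_assoc]
    rw [hS2, mul_one]
  have r3 : S * Eb = E * S := by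
    rw [← hSES]
    simp only [mul_assoc]
    rw [hS5]
  have hE : S * Eb * S = E := by
    rw [← hSES]
    simp only [mul_assoc]
    rw [hS5, hS2, mul_one]
  have r2 : E * Eb = E * S := by
    calc E * Eb = (S * Eb * S) * Eb := by rw [hE]
      _ = S * (Eb * S * Eb) := by simp only [mul_assoc]
      _ = S * Eb := by rw [hEbSEb]
      _ = E * S := r3
  have r4 : Eb * E = S * E := by
    calc Eb * E = Eb * (S * Eb * S) := by rw [hE]
      _ = (Eb * S * Eb) * S := by simp only [mul_assoc]
      _ = Eb * S := by rw [hEbSEb]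
      _ = S * E := r1
  have r6 : E * (S * E) = E := by
    calc E * (S * E) = E * (Eb * S) := by rw [r1]
      _ = (E * Eb) * S := by rw [mul_assoc]
      _ = (E * S) * S := by rw [r2]
      _ = E * (S * S) := by rw [mul_assoc]
      _ = E := by rw [hS2, mul_one]
  simp only [mul_sub, sub_mul, mul_one, one_mul, smul_mul_assoc, mul_smul_comm, smul_smul,
    mul_assoc, r1, r2, r3, r4, r6, hS5, hS2]
  match_scalars
  all_goals (try ring)
  all_goals (field_simp; ring)

end BrauerFusion
end
end
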